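/- arXiv:1302.4338 — 7 statements merged into one kernel-verified Lean document; each statement's English description precedes it below -/
import Mathlib

section
/- Suppose e > 1 and z ∈ L((σ)) satisfies D(D(z)) = 2z³ + t·z + α. Then every coefficient of z at an index not divisible by e is zero (i.e., z lies in the subfield L((σ^e)) of Laurent series supported on multiples of e). -/
section Helpers

variable {L : Type*} [Field L]

lemma aux_mul_coeff_subset (f g : LaurentSeries L) (n : ℤ) (S : Finset (ℤ × ℤ))
    (hS : ∀ p ∈ S, p.1 + p.2 = n)
    (h : ∀ i j : ℤ, i + j = n → f.coeff i ≠ 0 → g.coeff j ≠ 0 → (i, j) ∈ S) :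
    (f * g).coeff n = ∑ p ∈ S, f.coeff p.1 * g.coeff p.2 := by
  rw [HahnSeries.coeff_mul]
  apply Finset.sum_subset
  · intro p hp
    rw [Finset.mem_addAntidiagonal] at hp
    exact h p.1 p.2 hp.2.2 hp.1 hp.2.1
  · intro p hp hnp
    rw [Finset.mem_addAntidiagonal] at hnp
    by_cases h1 : f.coeff p.1 = 0
    · rw [h1, zero_mul]
    · by_cases h2 : g.coeff p.2 = 0
      · rw [h2, mul_zero]
      · exact absurd ⟨h1, h2, hS p hp⟩ hnp

lemma aux_C_mul_coeff (b : L) (x : LaurentSeries L) (n : ℤ) :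
    (HahnSeries.C b * x).coeff n = b * x.coeff n := by
  have := HahnSeries.coeff_single_mul_add (b := (0:ℤ)) (r := b) (x := x) (a := n)
  simpa using this

lemma aux_single_mul_coeff (k : ℤ) (x : LaurentSeries L) (n : ℤ) :
    (HahnSeries.single k (1:L) * x).coeff n = x.coeff (n - k) := by
  have := HahnSeries.coeff_single_mul_add (b := k) (r := (1:L)) (x := x) (a := n - k)
  simpa using this

lemma aux_mul_single_coeff (k : ℤ) (x : LaurentSeries L) (n : ℤ) :
    (x * HahnSeries.single k (1:L)).coeff n = x.coeff (n - k) := by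
  have := HahnSeries.coeff_mul_single_add (b := k) (r := (1:L)) (x := x) (a := n - k)
  simpa using this

end Helpers

/-- The field of formal Laurent series over a field of characteristic zero has
characteristic zero. -/
instance {L : Type*} [Field L] [CharZero L] : CharZero (LaurentSeries L) where
  cast_injective m n h := by
    have hc : (HahnSeries.C (m : L) : LaurentSeries L) = HahnSeries.C (n : L) := by
      rw [map_natCast, map_natCast]; exact h
    exact Nat.cast_injective (HahnSeries.C_injective hc)

set_option maxHeartbeats 2000000 in
/-- Suppose `e > 1` and `z ∈ L((σ))` satisfies `D(D(z)) = 2z³ + t·z + α`.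
Then every coefficient of `z` at an index not divisible by `e` is zero. -/
theorem statement_2
    (L : Type*) [Field L] [CharZero L]
    (e : ℕ) (he : 0 < e)
    (γ t α : L) (hγ : γ ≠ 0)
    (σ : LaurentSeries L) (hσ : σ = HahnSeries.single (1 : ℤ) 1)
    (D : Derivation ℚ (LaurentSeries L) (LaurentSeries L))
    -- (i): for every `a ∈ L`, the coefficient of `D(a)` at every index that is
    -- negative or not divisible by `e` is zero
    (hD₁ : ∀ a : L, ∀ n : ℤ, (n < 0 ∨ ¬ (e : ℤ) ∣ n) → (D (HahnSeries.C a)).coeff n = 0)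
    -- (ii): `σ^(e−1)·D(σ) = (1/e)·(γ + c₁σ^e + c₂σ^(2e) + c₃σ^(3e))` for some `c₁ c₂ c₃ ∈ L`
    (hD₂ : ∃ c₁ c₂ c₃ : L,
      σ ^ (e - 1) * D σ =
        HahnSeries.C ((e : L)⁻¹) *
          (HahnSeries.C γ + HahnSeries.C c₁ * σ ^ e + HahnSeries.C c₂ * σ ^ (2 * e)
            + HahnSeries.C c₃ * σ ^ (3 * e)))
    -- (iii): `D` acts termwise
    (hD₃ : ∀ f : LaurentSeries L, ∀ n : ℤ,
      (D f).coeff n = ∑ᶠ i : ℤ,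
        (D (HahnSeries.C (f.coeff i)) * σ ^ i
          + (i : LaurentSeries L) * HahnSeries.C (f.coeff i) * σ ^ (i - 1) * D σ).coeff n)
    (he₁ : 1 < e)
    (z : LaurentSeries L)
    (hz : D (D z) = 2 * z ^ 3 + HahnSeries.C t * z + HahnSeries.C α) :
    ∀ n : ℤ, ¬ (e : ℤ) ∣ n → z.coeff n = 0 := by
  obtain ⟨c₁, c₂, c₃, hD2⟩ := hD₂
  have heL : (e : L) ≠ 0 := Nat.cast_ne_zero.mpr he.ne'
  set d₀ : L := (e : L)⁻¹ * γ with hd₀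
  set d₁ : L := (e : L)⁻¹ * c₁ with hd₁
  set d₂ : L := (e : L)⁻¹ * c₂ with hd₂
  set d₃ : L := (e : L)⁻¹ * c₃ with hd₃
  have hd₀ne : d₀ ≠ 0 := mul_ne_zero (inv_ne_zero heL) hγ
  have hσz : ∀ k : ℤ, σ ^ k = HahnSeries.single k (1:L) := by
    intro k; rw [hσ]; exact (RatFunc.single_zpow k).symm
  have hσn : ∀ k : ℕ, σ ^ k = HahnSeries.single (k : ℤ) (1:L) := by
    intro k; rw [hσ]; exact (RatFunc.single_one_eq_pow k).symm
  set G : LaurentSeries L := σ ^ (e - 1) * D σ with hG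
  have hGc : ∀ q : ℤ, G.coeff q =
      (if q = 0 then d₀ else 0) + (if q = (e:ℤ) then d₁ else 0)
        + (if q = 2*(e:ℤ) then d₂ else 0) + (if q = 3*(e:ℤ) then d₃ else 0) := by
    intro q
    rw [hD2, aux_C_mul_coeff]
    rw [HahnSeries.coeff_add, HahnSeries.coeff_add, HahnSeries.coeff_add]
    rw [hσn e, hσn (2*e), hσn (3*e), aux_C_mul_coeff, aux_C_mul_coeff, aux_C_mul_coeff]
    simp only [HahnSeries.C_apply, HahnSeries.coeff_single]
    push_cast
    split_ifs <;> first | (exfalso; omega) | ring | (simp only [hd₀, hd₁, hd₂, hd₃]; field_simp; try ring)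
  have hterm : ∀ (f : LaurentSeries L) (i n : ℤ),
      (D (HahnSeries.C (f.coeff i)) * σ ^ i
        + (i : LaurentSeries L) * HahnSeries.C (f.coeff i) * σ ^ (i - 1) * D σ).coeff n
      = (D (HahnSeries.C (f.coeff i))).coeff (n - i)
        + (i:L) * f.coeff i * G.coeff (n - i + e) := by
    intro f i n
    have hec : ((e - 1 : ℕ) : ℤ) = (e:ℤ) - 1 := by omega
    have key : (i : LaurentSeries L) * HahnSeries.C (f.coeff i) * σ ^ (i - 1) * D σ
        = HahnSeries.C ((i:L) * f.coeff i) * (HahnSeries.single (i - e) (1:L) * G) := by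
      rw [← map_intCast (HahnSeries.C : L →+* LaurentSeries L) i, ← map_mul]
      rw [hσz (i-1)]
      rw [hG, hσn (e-1), hec]
      rw [show HahnSeries.single (i - (1:ℤ)) (1:L)
          = HahnSeries.single (i - e) (1:L) * HahnSeries.single ((e:ℤ) - 1) (1:L) by
        rw [HahnSeries.single_mul_single, one_mul]; congr 1; ring]
      ring
    rw [HahnSeries.coeff_add, key, aux_C_mul_coeff, aux_single_mul_coeff, hσz i,
      aux_mul_single_coeff]
    rw [show n - (i - (e:ℤ)) = n - i + e by ring]
  have hmaster : ∀ (f : LaurentSeries L) (n : ℤ),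
      (D f).coeff n = ∑ᶠ i : ℤ,
        ((D (HahnSeries.C (f.coeff i))).coeff (n - i)
          + (i:L) * f.coeff i * G.coeff (n - i + e)) := by
    intro f n
    rw [hD₃ f n]
    exact finsum_congr (fun i => hterm f i n)
  -- Lemma B : order-based description of D
  have lemB : ∀ (f : LaurentSeries L) (N : ℤ), (∀ j, j < N → f.coeff j = 0) →
      ∀ n, n ≤ N - e →
      (D f).coeff n = if n = N - e then (N:L) * d₀ * f.coeff N else 0 := by
    intro f N hf n hn
    rw [hmaster]
    rw [finsum_eq_single _ (n + (e:ℤ)) ?side]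
    case side =>
      intro i hi
      by_cases hfi : f.coeff i = 0
      · simp [hfi]
      · have hiN : N ≤ i := not_lt.1 (fun h => hfi (hf i h))
        have hA := hD₁ (f.coeff i) (n - i) (Or.inl (by omega))
        have e1 : n - i + (e:ℤ) ≠ 0 := by omega
        have e2 : n - i + (e:ℤ) ≠ (e:ℤ) := by omega
        have e3 : n - i + (e:ℤ) ≠ 2*(e:ℤ) := by omega
        have e4 : n - i + (e:ℤ) ≠ 3*(e:ℤ) := by omega
        rw [hA, hGc, if_neg e1, if_neg e2, if_neg e3, if_neg e4]
        ring
    · have hA := hD₁ (f.coeff (n + e)) (n - (n + e)) (Or.inl (by omega))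
      rw [hA, hGc]
      rw [if_pos (by ring), if_neg (by omega), if_neg (by omega), if_neg (by omega)]
      by_cases hcase : n = N - (e:ℤ)
      · rw [if_pos hcase]
        have : n + (e:ℤ) = N := by omega
        rw [this]
        push_cast
        ring
      · rw [if_neg hcase]
        have : f.coeff (n + e) = 0 := hf _ (by omega)
        rw [this]
        ring
  -- Lemma C : congruence-class based description of D
  have lemC : ∀ (f : LaurentSeries L) (m : ℤ), ¬ (e:ℤ) ∣ m →
      (∀ j, ¬ (e:ℤ) ∣ j → j < m → f.coeff j = 0) →
      ∀ n, ¬ (e:ℤ) ∣ n → n ≤ m - e →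
      (D f).coeff n = if n = m - e then (m:L) * d₀ * f.coeff m else 0 := by
    intro f m hm hf n hnd hn
    rw [hmaster]
    rw [finsum_eq_single _ (n + (e:ℤ)) ?side2]
    case side2 =>
      intro i hi
      by_cases hdiv : (e:ℤ) ∣ (n - i)
      · obtain ⟨c, hc⟩ := hdiv
        have hid : ¬ (e:ℤ) ∣ i := by
          rintro ⟨d, hd⟩
          exact hnd ⟨c + d, by linear_combination hc + hd⟩
        by_cases hfi : f.coeff i = 0
        · simp [hfi]
        · have him : m ≤ i := not_lt.1 (fun h => hfi (hf i hid h))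
          have hA := hD₁ (f.coeff i) (n - i) (Or.inl (by omega))
          have e1 : n - i + (e:ℤ) ≠ 0 := by omega
          have e2 : n - i + (e:ℤ) ≠ (e:ℤ) := by omega
          have e3 : n - i + (e:ℤ) ≠ 2*(e:ℤ) := by omega
          have e4 : n - i + (e:ℤ) ≠ 3*(e:ℤ) := by omega
          rw [hA, hGc, if_neg e1, if_neg e2, if_neg e3, if_neg e4]
          ring
      · have hA := hD₁ (f.coeff i) (n - i) (Or.inr hdiv)
        have e1 : n - i + (e:ℤ) ≠ 0 := fun h => hdiv ⟨-1, by linear_combination h⟩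
        have e2 : n - i + (e:ℤ) ≠ (e:ℤ) := fun h => hdiv ⟨0, by linear_combination h⟩
        have e3 : n - i + (e:ℤ) ≠ 2*(e:ℤ) := fun h => hdiv ⟨1, by linear_combination h⟩
        have e4 : n - i + (e:ℤ) ≠ 3*(e:ℤ) := fun h => hdiv ⟨2, by linear_combination h⟩
        rw [hA, hGc, if_neg e1, if_neg e2, if_neg e3, if_neg e4]
        ring
    · have hA := hD₁ (f.coeff (n + e)) (n - (n + e)) (Or.inl (by omega))
      rw [hA, hGc]
      rw [if_pos (by ring), if_neg (by omega), if_neg (by omega), if_neg (by omega)]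
      have hbadne : ¬ (e:ℤ) ∣ (n + e) := by
        rintro ⟨c, hc⟩
        exact hnd ⟨c - 1, by linear_combination hc⟩
      by_cases hcase : n = m - (e:ℤ)
      · rw [if_pos hcase]
        have : n + (e:ℤ) = m := by omega
        rw [this]
        push_cast
        ring
      · rw [if_neg hcase]
        have : f.coeff (n + e) = 0 := hf _ hbadne (by omega)
        rw [this]
        ring
  -- RHS coefficients
  have hRHS : ∀ n : ℤ, (D (D z)).coeff n
      = 2 * (z^3).coeff n + t * z.coeff n + (if n = 0 then α else 0) := by
    intro n
    rw [hz]
    rw [HahnSeries.coeff_add, HahnSeries.coeff_add, aux_C_mul_coeff]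
    have h2 : ((2 : LaurentSeries L) * z ^ 3).coeff n = 2 * (z^3).coeff n := by
      rw [two_mul, HahnSeries.coeff_add, two_mul]
    rw [h2]
    congr 1
    simp [HahnSeries.C_apply, HahnSeries.coeff_single]
  -- low cube coefficient
  have cube_low : ∀ N : ℤ, (∀ j, j < N → z.coeff j = 0) →
      (z^3).coeff (3*N) = z.coeff N ^ 3 := by
    intro N hN
    have hbound : ∀ i : ℤ, z.coeff i ≠ 0 → N ≤ i :=
      fun i hi => not_lt.1 (fun h => hi (hN i h))
    have hsq0 : ∀ k, k < 2*N → (z*z).coeff k = 0 := by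
      intro k hk
      rw [aux_mul_coeff_subset z z k ∅ (by simp) ?_, Finset.sum_empty]
      intro i j hij hi hj
      exact absurd hij (by have := hbound i hi; have := hbound j hj; omega)
    have hsq : (z*z).coeff (2*N) = z.coeff N ^ 2 := by
      rw [aux_mul_coeff_subset z z (2*N) {(N,N)} (by simp; ring) ?_, Finset.sum_singleton, sq]
      intro i j hij hi hj
      have := hbound i hi; have := hbound j hj
      simp only [Finset.mem_singleton, Prod.mk.injEq]
      omega
    have h3 : z^3 = (z*z)*z := by ring
    rw [h3, aux_mul_coeff_subset (z*z) z (3*N) {(2*N, N)} (by simp; ring) ?_,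
      Finset.sum_singleton, hsq]
    · ring
    · intro i j hij hi hj
      have h1 : 2*N ≤ i := not_lt.1 (fun h => hi (hsq0 i h))
      have h2 : N ≤ j := hbound j hj
      simp only [Finset.mem_singleton, Prod.mk.injEq]
      omega
  -- Step 1 : no coefficients below -e
  have H1 : ∀ j : ℤ, j < -(e:ℤ) → z.coeff j = 0 := by
    by_contra hcon
    push_neg at hcon
    obtain ⟨j, hj, hjne⟩ := hcon
    have hz0 : z ≠ 0 := fun h0 => hjne (by simp [h0])
    set N := z.order with hNdef
    have hNle : N ≤ j := HahnSeries.order_le_of_coeff_ne_zero hjne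
    have hNneg : N < -(e:ℤ) := lt_of_le_of_lt hNle hj
    have hzlow : ∀ i, i < N → z.coeff i = 0 := fun i hi =>
      HahnSeries.coeff_eq_zero_of_lt_order hi
    have hDlow : ∀ n, n < N - (e:ℤ) → (D z).coeff n = 0 := fun n hn => by
      rw [lemB z N hzlow n hn.le, if_neg hn.ne]
    have hDD : (D (D z)).coeff (3*N) = 0 := by
      rw [lemB (D z) (N - e) hDlow (3*N) (by omega), if_neg (by omega)]
    rw [hRHS, cube_low N hzlow] at hDD
    have hz3N : z.coeff (3*N) = 0 := hzlow _ (by omega)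
    rw [hz3N, if_neg (by omega)] at hDD
    have hNne : z.coeff N ≠ 0 := fun h => hz0 (HahnSeries.coeff_order_eq_zero.1 h)
    apply hNne
    have h3 : z.coeff N ^ 3 = 0 := by linear_combination hDD / 2
    exact pow_eq_zero_iff (by norm_num) |>.1 h3
  -- Step 2 : the leading coefficient relation
  have H2 : γ^2 * z.coeff (-(e:ℤ)) = z.coeff (-(e:ℤ))^3 := by
    have hed : (e:L) * d₀ = γ := by rw [hd₀]; field_simp
    have hDz := lemB z (-(e:ℤ)) (fun j hj => H1 j hj)
    have hDzlow : ∀ n, n < -(e:ℤ) - (e:ℤ) → (D z).coeff n = 0 := fun n hn => by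
      rw [hDz n hn.le, if_neg hn.ne]
    have hLHS : (D (D z)).coeff (3*(-(e:ℤ)))
        = ((-(e:ℤ) - e : ℤ):L) * d₀ * ((D z).coeff (-(e:ℤ) - e)) := by
      rw [lemB (D z) (-(e:ℤ) - e) hDzlow (3*(-(e:ℤ))) (by omega), if_pos (by omega)]
    rw [hDz (-(e:ℤ) - e) (by omega), if_pos (by ring)] at hLHS
    rw [hRHS, cube_low (-(e:ℤ)) (fun j hj => H1 j hj)] at hLHS
    rw [H1 (3*(-(e:ℤ))) (by omega), if_neg (by omega)] at hLHS
    push_cast at hLHS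
    linear_combination (-hLHS) / 2
      - (z.coeff (-(e:ℤ)) * (γ + (e:L)*d₀)) * hed
  -- Step 3 : main argument
  intro n hn
  by_contra hne
  set T : Set ℤ := {k | ¬ (e:ℤ) ∣ k ∧ z.coeff k ≠ 0} with hT
  have hTsub : T ⊆ z.support := fun k hk => hk.2
  have hTwf : T.IsWF := z.isWF_support.mono hTsub
  have hTne : T.Nonempty := ⟨n, hn, hne⟩
  set m := hTwf.min hTne with hmdef
  have hm : m ∈ T := hTwf.min_mem hTne
  have hmin : ∀ j, ¬(e:ℤ) ∣ j → j < m → z.coeff j = 0 := by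
    intro j hj hlt
    by_contra hc
    exact hTwf.not_lt_min hTne ⟨hj, hc⟩ hlt
  have hmge : -(e:ℤ) ≤ m := by
    by_contra hc
    exact hm.2 (H1 m (by omega))
  have hmne : m ≠ -(e:ℤ) := fun h => hm.1 (h ▸ ⟨-1, by ring⟩)
  have hmgt : -(e:ℤ) < m := lt_of_le_of_ne hmge (Ne.symm hmne)
  have hbadme : ¬ (e:ℤ) ∣ (m - e) := by
    rintro ⟨c, hc⟩
    exact hm.1 ⟨c + 1, by linear_combination hc⟩
  have hbad2e : ¬ (e:ℤ) ∣ (m - 2*e) := by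
    rintro ⟨c, hc⟩
    exact hm.1 ⟨c + 2, by linear_combination hc⟩
  have hbound : ∀ i : ℤ, z.coeff i ≠ 0 → -(e:ℤ) ≤ i :=
    fun i hi => not_lt.1 (fun h => hi (H1 i h))
  -- LHS at m - 2e
  have hDzC := lemC z m hm.1 hmin
  have hDzClow : ∀ j, ¬(e:ℤ) ∣ j → j < m - (e:ℤ) → (D z).coeff j = 0 := fun j hj hlt => by
    rw [hDzC j hj hlt.le, if_neg hlt.ne]
  have hLHS : (D (D z)).coeff (m - 2*e)
      = ((m - (e:ℤ) : ℤ):L) * d₀ * ((D z).coeff (m - e)) := by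
    rw [lemC (D z) (m - e) hbadme hDzClow (m - 2*e) hbad2e (by omega), if_pos (by ring)]
  rw [hDzC (m - (e:ℤ)) hbadme (by omega), if_pos rfl] at hLHS
  -- cube coefficient at m - 2e
  have hw0 : ∀ k, k < -2*(e:ℤ) → (z*z).coeff k = 0 := by
    intro k hk
    rw [aux_mul_coeff_subset z z k ∅ (by simp) ?_, Finset.sum_empty]
    intro i j hij hi hj
    exact absurd hij (by have := hbound i hi; have := hbound j hj; omega)
  have hw2 : (z*z).coeff (-2*(e:ℤ)) = z.coeff (-(e:ℤ)) ^ 2 := by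
    rw [aux_mul_coeff_subset z z (-2*(e:ℤ)) {(-(e:ℤ),-(e:ℤ))} (by simp; ring) ?_,
      Finset.sum_singleton, sq]
    intro i j hij hi hj
    have := hbound i hi; have := hbound j hj
    simp only [Finset.mem_singleton, Prod.mk.injEq]
    omega
  have hw3 : ∀ k, ¬(e:ℤ) ∣ k → k < m - (e:ℤ) → (z*z).coeff k = 0 := by
    intro k hkd hk
    rw [aux_mul_coeff_subset z z k ∅ (by simp) ?_, Finset.sum_empty]
    intro i j hij hi hj
    exfalso
    by_cases hdi : (e:ℤ) ∣ i
    · have hdj : ¬ (e:ℤ) ∣ j := by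
        rintro ⟨c, hc⟩
        obtain ⟨d, hd⟩ := hdi
        exact hkd ⟨c + d, by linear_combination hc + hd - hij⟩
      have := not_lt.1 (fun h => hj (hmin j hdj h))
      have := hbound i hi
      omega
    · have := not_lt.1 (fun h => hi (hmin i hdi h))
      have := hbound j hj
      omega
  have hw4 : (z*z).coeff (m - (e:ℤ)) = 2 * (z.coeff m * z.coeff (-(e:ℤ))) := by
    rw [aux_mul_coeff_subset z z (m - (e:ℤ)) {(m, -(e:ℤ)), (-(e:ℤ), m)} ?hS ?hmem]
    case hS =>
      intro p hp
      simp only [Finset.mem_insert, Finset.mem_singleton] at hp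
      rcases hp with rfl | rfl <;> simp <;> ring
    case hmem =>
      intro i j hij hi hj
      have hbi := hbound i hi
      have hbj := hbound j hj
      simp only [Finset.mem_insert, Finset.mem_singleton, Prod.mk.injEq]
      by_cases hdi : (e:ℤ) ∣ i
      · have hdj : ¬ (e:ℤ) ∣ j := by
          rintro ⟨c, hc⟩
          obtain ⟨d, hd⟩ := hdi
          exact hbadme ⟨c + d, by linear_combination hc + hd - hij⟩
        have := not_lt.1 (fun h => hj (hmin j hdj h))
        right; omega
      · have := not_lt.1 (fun h => hi (hmin i hdi h))
        left; omega
    · rw [Finset.sum_pair (by intro h; rw [Prod.mk.injEq] at h; omega)]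
      ring
  have hcube : (z^3).coeff (m - 2*(e:ℤ)) = 3 * z.coeff (-(e:ℤ))^2 * z.coeff m := by
    have h3 : z^3 = (z*z)*z := by ring
    rw [h3, aux_mul_coeff_subset (z*z) z (m - 2*(e:ℤ))
      {(m - (e:ℤ), -(e:ℤ)), (-2*(e:ℤ), m)} ?hS ?hmem]
    case hS =>
      intro p hp
      simp only [Finset.mem_insert, Finset.mem_singleton] at hp
      rcases hp with rfl | rfl <;> simp <;> ring
    case hmem =>
      intro k i hki hk hi
      have hbi := hbound i hi
      have hbk : -2*(e:ℤ) ≤ k := not_lt.1 (fun h => hk (hw0 k h))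
      simp only [Finset.mem_insert, Finset.mem_singleton, Prod.mk.injEq]
      by_cases hdi : (e:ℤ) ∣ i
      · have hdk : ¬ (e:ℤ) ∣ k := by
          rintro ⟨c, hc⟩
          obtain ⟨d, hd⟩ := hdi
          exact hbad2e ⟨c + d, by linear_combination hc + hd - hki⟩
        have := not_lt.1 (fun h => hk (hw3 k hdk h))
        left; omega
      · have := not_lt.1 (fun h => hi (hmin i hdi h))
        right; omega
    · rw [Finset.sum_pair (by intro h; rw [Prod.mk.injEq] at h; omega), hw4, hw2]
      ring
  -- put it together
  have heq := hLHS
  rw [hRHS, hcube, hmin (m - 2*(e:ℤ)) hbad2e (by omega),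
    if_neg (fun h => hbad2e (by rw [h]; exact ⟨0, by ring⟩))] at heq
  push_cast at heq
  -- heq : 2 * (3 * a₋ₑ² * aₘ) + t*0 + 0 = ((m:L) - e) * d₀ * ((m:L) * d₀ * aₘ)
  have hamne : z.coeff m ≠ 0 := hm.2
  have E : ((m:L) - e) * (m:L) * d₀^2 = 6 * z.coeff (-(e:ℤ))^2 := by
    have := mul_right_cancel₀ hamne
      (show (((m:L) - e) * (m:L) * d₀^2) * z.coeff m
        = (6 * z.coeff (-(e:ℤ))^2) * z.coeff m by linear_combination -heq)
    exact this
  by_cases ha : z.coeff (-(e:ℤ)) = 0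
  · rw [ha] at E
    have hd2 : d₀^2 ≠ 0 := pow_ne_zero _ hd₀ne
    have hzero : ((m:L) - e) * (m:L) = 0 := by
      have := mul_right_cancel₀ hd2
        (show (((m:L) - e) * (m:L)) * d₀^2 = 0 * d₀^2 by linear_combination E)
      simpa using this
    rcases mul_eq_zero.1 hzero with h | h
    · have : (m:L) = ((e:ℕ):L) := by linear_combination h
      have : ((m:ℤ):L) = (((e:ℕ):ℤ):L) := by push_cast; exact this
      have hme : m = ((e:ℕ):ℤ) := Int.cast_injective this
      exact hm.1 ⟨1, by omega⟩
    · have : ((m:ℤ):L) = ((0:ℤ):L) := by push_cast; linear_combination h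
      have hme : m = 0 := Int.cast_injective this
      exact hm.1 ⟨0, by omega⟩
  · have hed : (e:L) * d₀ = γ := by rw [hd₀]; field_simp
    have ha2 : z.coeff (-(e:ℤ))^2 = γ^2 := by
      have h0 : z.coeff (-(e:ℤ)) * (γ^2 - z.coeff (-(e:ℤ))^2) = 0 := by
        linear_combination H2
      rcases mul_eq_zero.1 h0 with h | h
      · exact absurd h ha
      · linear_combination -h
    rw [ha2, ← hed] at E
    -- E : ((m:L) - e) * (m:L) * d₀^2 = 6 * ((e:L)*d₀)^2
    have hd2 : d₀^2 ≠ 0 := pow_ne_zero _ hd₀ne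
    have E2 : ((m:L) - e) * (m:L) = 6 * (e:L)^2 := by
      have := mul_right_cancel₀ hd2
        (show (((m:L) - e) * (m:L)) * d₀^2 = (6 * (e:L)^2) * d₀^2 by linear_combination E)
      exact this
    have hfact : ((m:L) - 3*e) * ((m:L) + 2*e) = 0 := by linear_combination E2
    rcases mul_eq_zero.1 hfact with h | h
    · have : ((m:ℤ):L) = ((3*(e:ℕ):ℤ):L) := by push_cast; linear_combination h
      have hme : m = 3*((e:ℕ):ℤ) := by have := Int.cast_injective this; omega
      exact hm.1 ⟨3, by omega⟩
    · have : ((m:ℤ):L) = ((-2*(e:ℕ):ℤ):L) := by push_cast; linear_combination h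
      have hme : m = -2*((e:ℕ):ℤ) := by have := Int.cast_injective this; omega
      exact hm.1 ⟨-2, by omega⟩
end

section
/- Suppose e > 1. Then there is no nonzero z ∈ L((σ)) of negative order which satisfies D(D(z)) = 2z³ + t·z + α and has a nonzero coefficient at some index not divisible by e. -/
/-- Suppose `e > 1`. Then there is no nonzero `z ∈ L((σ))` of negative
order which satisfies `D(D(z)) = 2z³ + t·z + α` and has a nonzero coefficient at some
index not divisible by `e`. -/
theorem statement_5
    (L : Type*) [Field L] [CharZero L]
    (e : ℕ) (he : 0 < e)
    (γ t α : L) (hγ : γ ≠ 0)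
    (σ : LaurentSeries L) (hσ : σ = HahnSeries.single (1 : ℤ) 1)
    (D : Derivation ℚ (LaurentSeries L) (LaurentSeries L))
    (hD₁ : ∀ a : L, ∀ n : ℤ, (n < 0 ∨ ¬ (e : ℤ) ∣ n) → (D (HahnSeries.C a)).coeff n = 0)
    (hD₂ : ∃ c₁ c₂ c₃ : L,
      σ ^ (e - 1) * D σ =
        HahnSeries.C ((e : L)⁻¹) *
          (HahnSeries.C γ + HahnSeries.C c₁ * σ ^ e + HahnSeries.C c₂ * σ ^ (2 * e)
            + HahnSeries.C c₃ * σ ^ (3 * e)))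
    (hD₃ : ∀ f : LaurentSeries L, ∀ n : ℤ,
      (D f).coeff n = ∑ᶠ i : ℤ,
        (D (HahnSeries.C (f.coeff i)) * σ ^ i
          + (i : LaurentSeries L) * HahnSeries.C (f.coeff i) * σ ^ (i - 1) * D σ).coeff n)
    (he₁ : 1 < e) :
    ¬ ∃ z : LaurentSeries L, z ≠ 0 ∧ z.order < 0 ∧
        D (D z) = 2 * z ^ 3 + HahnSeries.C t * z + HahnSeries.C α ∧
        ∃ n : ℤ, ¬ (e : ℤ) ∣ n ∧ z.coeff n ≠ 0 := by
  obtain ⟨c₁, c₂, c₃, hc⟩ := hD₂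
  set E : ℤ := (e : ℤ) with hE
  have hE1 : 1 ≤ E := by have : 1 ≤ e := he; show (1:ℤ) ≤ (e:ℤ); exact_mod_cast this
  have heL : (e : L) ≠ 0 := Nat.cast_ne_zero.mpr he.ne'
  -- σ powers
  have hzp : ∀ i : ℤ, σ ^ i = HahnSeries.single i 1 := by
    intro i; rw [hσ, ← RatFunc.single_zpow]
  have hnp : ∀ k : ℕ, σ ^ k = HahnSeries.single (k : ℤ) 1 := by
    intro k; rw [hσ, ← RatFunc.single_one_eq_pow]
  have hmulz : ∀ (f : LaurentSeries L) (i m : ℤ), (f * σ ^ i).coeff m = f.coeff (m - i) := by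
    intro f i m; rw [hzp]
    have := HahnSeries.coeff_mul_single_add (r := (1:L)) (x := f) (a := m - i) (b := i)
    rw [sub_add_cancel] at this
    rw [this, mul_one]
  have hmuln : ∀ (f : LaurentSeries L) (k : ℕ) (m : ℤ), (f * σ ^ k).coeff m = f.coeff (m - k) := by
    intro f k m; rw [hnp]
    have := HahnSeries.coeff_mul_single_add (r := (1:L)) (x := f) (a := m - k) (b := (k : ℤ))
    rw [sub_add_cancel] at this
    rw [this, mul_one]
  have hCmul : ∀ (b : L) (f : LaurentSeries L) (m : ℤ),
      (HahnSeries.C b * f).coeff m = b * f.coeff m := by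
    intro b f m; rw [HahnSeries.C_apply, HahnSeries.coeff_single_zero_mul]
  -- coefficients of Dσ
  set Y := D σ with hY
  have hYcoeff : ∀ m : ℤ, Y.coeff m = (e : L)⁻¹ *
      ((if m = 1 - E then γ else 0) + (if m = 1 then c₁ else 0)
        + (if m = 1 + E then c₂ else 0) + (if m = 1 + 2*E then c₃ else 0)) := by
    intro m
    have h1 : Y.coeff m = (σ ^ (e-1) * Y).coeff (m + (E - 1)) := by
      rw [mul_comm, hmuln]
      congr 1
      have : ((e - 1 : ℕ) : ℤ) = E - 1 := by
        have : (1:ℕ) ≤ e := he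
        push_cast [Nat.cast_sub this]; ring
      rw [this]; ring
    rw [h1, hc, hCmul]
    congr 1
    simp only [HahnSeries.coeff_add]
    have sc : ∀ (b : L) (k : ℕ) (j : ℤ), (HahnSeries.C b * σ ^ k).coeff j
        = if j = (k:ℤ) then b else 0 := by
      intro b k j
      rw [hnp, HahnSeries.C_apply, HahnSeries.single_mul_single, zero_add, mul_one]
      by_cases h : j = (k:ℤ)
      · rw [if_pos h, h, HahnSeries.coeff_single_same]
      · rw [if_neg h, HahnSeries.coeff_single_of_ne h]
    have sc0 : ∀ (b : L) (j : ℤ), (HahnSeries.C b).coeff j = if j = 0 then b else 0 := by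
      intro b j; rw [HahnSeries.C_apply]
      by_cases h : j = 0
      · rw [if_pos h, h, HahnSeries.coeff_single_same]
      · rw [if_neg h, HahnSeries.coeff_single_of_ne h]
    rw [sc, sc, sc, sc0]
    have e1 : m + (E - 1) = 0 ↔ m = 1 - E := by omega
    have e2 : m + (E - 1) = (e : ℤ) ↔ m = 1 := by omega
    have e3 : m + (E - 1) = ((2*e : ℕ) : ℤ) ↔ m = 1 + E := by push_cast; omega
    have e4 : m + (E - 1) = ((3*e : ℕ) : ℤ) ↔ m = 1 + 2*E := by push_cast; omega
    rw [if_congr e1 rfl rfl, if_congr e2 rfl rfl, if_congr e3 rfl rfl, if_congr e4 rfl rfl]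
  have hY1 : Y.coeff (1 - E) = (e : L)⁻¹ * γ := by
    rw [hYcoeff]
    have h2 : ¬ (1 - E = 1) := by omega
    have h3 : ¬ (1 - E = 1 + E) := by omega
    have h4 : ¬ (1 - E = 1 + 2*E) := by omega
    simp [h2, h3, h4]
  have hY0 : ∀ m : ℤ, ¬ E ∣ (m - 1) → Y.coeff m = 0 := by
    intro m hm
    rw [hYcoeff]
    have h1 : ¬ (m = 1 - E) := by rintro rfl; exact hm ⟨-1, by ring⟩
    have h2 : ¬ (m = 1) := by rintro rfl; exact hm ⟨0, by ring⟩
    have h3 : ¬ (m = 1 + E) := by rintro rfl; exact hm ⟨1, by ring⟩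
    have h4 : ¬ (m = 1 + 2*E) := by rintro rfl; exact hm ⟨2, by ring⟩
    simp [h1, h2, h3, h4]
  have hYneg : ∀ m : ℤ, m < 1 - E → Y.coeff m = 0 := by
    intro m hm
    rw [hYcoeff]
    have h1 : ¬ (m = 1 - E) := by omega
    have h2 : ¬ (m = 1) := by omega
    have h3 : ¬ (m = 1 + E) := by omega
    have h4 : ¬ (m = 1 + 2*E) := by omega
    simp [h1, h2, h3, h4]
  -- master formula
  set F : LaurentSeries L → ℤ → ℤ → L := fun f m i =>
    (D (HahnSeries.C (f.coeff i))).coeff (m - i) + (i : L) * f.coeff i * Y.coeff (m - i + 1)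
    with hFdef
  have hmaster : ∀ (f : LaurentSeries L) (m : ℤ), (D f).coeff m = ∑ᶠ i : ℤ, F f m i := by
    intro f m
    rw [hD₃ f m]
    refine finsum_congr fun i => ?_
    rw [HahnSeries.coeff_add, hFdef]
    congr 1
    · exact hmulz _ i m
    · have hre : (i : LaurentSeries L) * HahnSeries.C (f.coeff i) * σ ^ (i-1) * Y
          = ((i : LaurentSeries L) * HahnSeries.C (f.coeff i) * Y) * σ ^ (i-1) := by ring
      rw [hre, hmulz, show m - (i-1) = m - i + 1 from by ring]
      have hi : (i : LaurentSeries L) = HahnSeries.C ((i : ℤ) : L) := by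
        rw [map_intCast]
      rw [hi, ← map_mul, hCmul]
  -- vanishing criteria for F
  have hF1 : ∀ (f : LaurentSeries L) (m i : ℤ), ¬ E ∣ (m - i) → F f m i = 0 := by
    intro f m i h
    simp only [hFdef]
    have h1 : (D (HahnSeries.C (f.coeff i))).coeff (m - i) = 0 := hD₁ _ _ (Or.inr h)
    have h2 : Y.coeff (m - i + 1) = 0 := hY0 _ (by rwa [show m - i + 1 - 1 = m - i from by ring])
    rw [h1, h2, mul_zero, add_zero]
  have hF2 : ∀ (f : LaurentSeries L) (m i : ℤ), m + E < i → F f m i = 0 := by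
    intro f m i h
    simp only [hFdef]
    have h1 : (D (HahnSeries.C (f.coeff i))).coeff (m - i) = 0 := hD₁ _ _ (Or.inl (by omega))
    have h2 : Y.coeff (m - i + 1) = 0 := hYneg _ (by omega)
    rw [h1, h2, mul_zero, add_zero]
  have hF3 : ∀ (f : LaurentSeries L) (m i : ℤ), f.coeff i = 0 → F f m i = 0 := by
    intro f m i h
    simp only [hFdef]
    simp only [h, map_zero, HahnSeries.coeff_zero, mul_zero, zero_mul, add_zero]
  have hvanish : ∀ (f : LaurentSeries L) (m : ℤ),
      (∀ i, E ∣ (m - i) → i ≤ m + E → f.coeff i = 0) → (D f).coeff m = 0 := by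
    intro f m h
    rw [hmaster]
    apply finsum_eq_zero_of_forall_eq_zero
    intro i
    by_cases h1 : E ∣ (m - i)
    · by_cases h2 : i ≤ m + E
      · exact hF3 _ _ _ (h i h1 h2)
      · exact hF2 _ _ _ (by omega)
    · exact hF1 _ _ _ h1
  have hlead : ∀ (f : LaurentSeries L) (j : ℤ),
      (∀ i, i < j → E ∣ (j - i) → f.coeff i = 0) →
      (D f).coeff (j - E) = (j : L) * f.coeff j * ((e : L)⁻¹ * γ) := by
    intro f j h
    rw [hmaster]
    rw [finsum_eq_single _ j ?_]
    · simp only [hFdef]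
      have h1 : (D (HahnSeries.C (f.coeff j))).coeff (j - E - j) = 0 :=
        hD₁ _ _ (Or.inl (by omega))
      rw [h1, zero_add, show j - E - j + 1 = 1 - E from by ring, hY1]
    · intro i hij
      by_cases h1 : E ∣ (j - E - i)
      · by_cases h2 : i ≤ j
        · refine hF3 _ _ _ (h i (lt_of_le_of_ne h2 hij) ?_)
          obtain ⟨k, hk⟩ := h1
          exact ⟨k + 1, by linear_combination hk⟩
        · exact hF2 _ _ _ (by omega)
      · exact hF1 _ _ _ h1
  -- second derivative leading coefficient
  have hlead2 : ∀ (w : LaurentSeries L) (j : ℤ),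
      (∀ i, i < j → E ∣ (j - i) → w.coeff i = 0) →
      (D (D w)).coeff (j - 2*E) = (j : L) * ((j : L) - e) * w.coeff j * ((e : L)⁻¹ * γ)^2 := by
    intro w j h
    have h1 : (D w).coeff (j - E) = (j : L) * w.coeff j * ((e : L)⁻¹ * γ) := hlead w j h
    have h2 : ∀ i, i < j - E → E ∣ (j - E - i) → (D w).coeff i = 0 := by
      intro i hi hd
      apply hvanish
      intro i' hd' hle
      apply h i' (by omega)
      obtain ⟨k, hk⟩ := hd
      obtain ⟨k', hk'⟩ := hd'
      exact ⟨k + k' + 1, by linear_combination hk + hk'⟩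
    have h3 := hlead (D w) (j - E) h2
    rw [show j - E - E = j - 2*E from by ring] at h3
    rw [h3, h1]
    push_cast [hE]
    ring
  -- coefficient of a product at the sum of orders
  have hlcoef : ∀ (f : LaurentSeries L), f ≠ 0 → f.leadingCoeff = f.coeff f.order := by
    intro f hf
    rw [HahnSeries.leadingCoeff_eq]
  have hlc : ∀ (f g : LaurentSeries L), f ≠ 0 → g ≠ 0 →
      (f * g).coeff (f.order + g.order) = f.coeff f.order * g.coeff g.order := by
    intro f g hf hg
    rw [HahnSeries.coeff_mul_order_add_order, hlcoef f hf, hlcoef g hg]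
  -- order characterization
  have horder : ∀ (f : LaurentSeries L) (j : ℤ), f.coeff j ≠ 0 →
      (∀ i, i < j → f.coeff i = 0) → f.order = j := by
    intro f j h1 h2
    have hf : f ≠ 0 := fun h0 => h1 (by rw [h0]; rfl)
    refine le_antisymm (HahnSeries.order_le_of_coeff_ne_zero h1) ?_
    by_contra hlt
    push_neg at hlt
    exact hf (HahnSeries.coeff_order_eq_zero.mp (h2 _ hlt))
  -- products of series supported on multiples of E
  have hmul0 : ∀ (f g : LaurentSeries L), (∀ i, ¬ E ∣ i → f.coeff i = 0) →
      (∀ i, ¬ E ∣ i → g.coeff i = 0) → ∀ m, ¬ E ∣ m → (f * g).coeff m = 0 := by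
    intro f g hf hg m hm
    rw [HahnSeries.coeff_mul]
    apply Finset.sum_eq_zero
    rintro ⟨i, j⟩ hij
    rw [Finset.mem_addAntidiagonal] at hij
    by_cases h1 : E ∣ i
    · have h2 : ¬ E ∣ j := by
        intro h2
        exact hm (by rw [← hij.2.2]; exact dvd_add h1 h2)
      rw [hg j h2, mul_zero]
    · rw [hf i h1, zero_mul]
  -- main argument
  rintro ⟨z, hz0, hzord, hzeq, n₀, hn₀, hzn₀⟩
  set N : ℤ := z.order with hN
  have ha : z.coeff N ≠ 0 := fun h => hz0 (HahnSeries.coeff_order_eq_zero.mp h)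
  set a : L := z.coeff N with haN
  have hbelow : ∀ i, i < N → z.coeff i = 0 := fun i hi =>
    HahnSeries.coeff_eq_zero_of_lt_order hi
  have hDDN : (D (D z)).coeff (N - 2*E) = (N : L) * ((N : L) - e) * a * ((e : L)⁻¹ * γ)^2 :=
    hlead2 z N (fun i hi _ => hbelow i hi)
  -- coefficient of RHS
  have hrhs : ∀ m : ℤ, (2 * z ^ 3 + HahnSeries.C t * z + HahnSeries.C α).coeff m
      = 2 * (z^3).coeff m + t * z.coeff m + (if m = 0 then α else 0) := by
    intro m
    rw [HahnSeries.coeff_add, HahnSeries.coeff_add, hCmul]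
    congr 1
    · congr 1
      rw [two_mul, HahnSeries.coeff_add, two_mul]
    · rw [HahnSeries.C_apply]
      by_cases h : m = 0
      · rw [if_pos h, h, HahnSeries.coeff_single_same]
      · rw [if_neg h, HahnSeries.coeff_single_of_ne h]
  have hz3 : z^3 = z*z*z := by ring
  have horder3 : (z*z*z).order = 3*N := by
    rw [HahnSeries.order_mul (mul_ne_zero hz0 hz0) hz0, HahnSeries.order_mul hz0 hz0]
    ring
  have hzz : (z*z).coeff (N + N) = a * a := by
    have h := hlc z z hz0 hz0
    rw [← hN] at h
    exact h
  have hzzz : (z^3).coeff (3*N) = a * a * a := by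
    rw [hz3]
    have h := hlc (z*z) z (mul_ne_zero hz0 hz0) hz0
    rw [HahnSeries.order_mul hz0 hz0, ← hN] at h
    rw [show 3*N = N + N + N from by ring, h, hzz]
  -- Step 1: the order is -E
  have hNE : N = -E := by
    rcases lt_trichotomy N (-E) with hcase | hcase | hcase
    · -- N < -E : compare coefficients at 3N
      exfalso
      have hL : (D (D z)).coeff (3*N) = 0 := by
        apply hvanish
        intro i _ hle
        apply hvanish
        intro i' _ hle'
        apply hbelow
        omega
      have heq : (D (D z)).coeff (3*N)
          = 2 * (z^3).coeff (3*N) + t * z.coeff (3*N) + (if (3*N : ℤ) = 0 then α else 0) := by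
        rw [hzeq, hrhs]
      rw [hL, hzzz, hbelow (3*N) (by omega), if_neg (by omega : ¬ (3*N : ℤ) = 0)] at heq
      have : a * a * a = 0 := by linear_combination (-1/2 : L) * heq
      exact ha (by
        rcases mul_eq_zero.mp this with h | h
        · rcases mul_eq_zero.mp h with h' | h' <;> exact h'
        · exact h)
    · exact hcase
    · -- -E < N < 0 : compare coefficients at N - 2E
      exfalso
      have heq : (D (D z)).coeff (N - 2*E)
          = 2 * (z^3).coeff (N - 2*E) + t * z.coeff (N - 2*E)
            + (if (N - 2*E : ℤ) = 0 then α else 0) := by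
        rw [hzeq, hrhs]
      have h1 : (z^3).coeff (N - 2*E) = 0 := by
        rw [hz3]
        apply HahnSeries.coeff_eq_zero_of_lt_order
        rw [horder3]
        omega
      rw [hDDN, h1, hbelow (N - 2*E) (by omega), if_neg (by omega : ¬ (N - 2*E : ℤ) = 0)] at heq
      have h2 : (N : L) * ((N : L) - e) = 0 := by
        have hne : a * ((e : L)⁻¹ * γ)^2 ≠ 0 := by
          exact mul_ne_zero ha (pow_ne_zero _ (mul_ne_zero (inv_ne_zero heL) hγ))
        have := mul_eq_zero.mp (by linear_combination heq :
          ((N : L) * ((N : L) - e)) * (a * ((e : L)⁻¹ * γ)^2) = 0)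
        tauto
      rcases mul_eq_zero.mp h2 with h3 | h3
      · have : N = 0 := by exact_mod_cast h3
        omega
      · have : (N : L) = ((E : ℤ) : L) := by rw [hE]; push_cast; linear_combination h3
        have : N = E := by exact_mod_cast this
        omega
  -- Step 2: a² = γ²
  have hgam : a * a = γ * γ := by
    have heq : (D (D z)).coeff (N - 2*E)
        = 2 * (z^3).coeff (N - 2*E) + t * z.coeff (N - 2*E)
          + (if (N - 2*E : ℤ) = 0 then α else 0) := by
      rw [hzeq, hrhs]
    rw [hDDN, show N - 2*E = 3*N from by omega, hzzz,
      hbelow (3*N) (by omega), if_neg (by omega : ¬ (3*N : ℤ) = 0)] at heq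
    have hNL : (N : L) = -(e : L) := by rw [hNE, hE]; push_cast; ring
    rw [hNL] at heq
    have h2 : 2 * a * (γ * γ) * (e : L)^2 = 2 * a * (a * a) * (e : L)^2 := by
      field_simp at heq
      linear_combination (e : L)^2 * heq
    exact mul_left_cancel₀ (mul_ne_zero two_ne_zero ha)
      (mul_right_cancel₀ (pow_ne_zero 2 heL) h2.symm)
  -- Step 3: minimal index not divisible by E
  obtain ⟨n, ⟨hnd, hzn⟩, hmin⟩ := Int.exists_least_of_bdd
    (P := fun n => ¬ E ∣ n ∧ z.coeff n ≠ 0)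
    ⟨N, fun i hi => le_of_not_gt fun hlt => hi.2 (hbelow i hlt)⟩ ⟨n₀, hn₀, hzn₀⟩
  have hminz : ∀ i, i < n → ¬ E ∣ i → z.coeff i = 0 := by
    intro i hi hd
    by_contra hcon
    exact absurd (hmin i ⟨hd, hcon⟩) (not_le.mpr hi)
  have hnge : -E ≤ n := by
    rw [← hNE]
    exact HahnSeries.order_le_of_coeff_ne_zero hzn
  have hngt : -E < n := lt_of_le_of_ne hnge (fun h => hnd (h ▸ ⟨-1, by ring⟩))
  -- LHS coefficient at n - 2E
  have hDDn : (D (D z)).coeff (n - 2*E)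
      = (n : L) * ((n : L) - e) * z.coeff n * ((e : L)⁻¹ * γ)^2 := by
    apply hlead2
    intro i hi hdvd
    apply hminz i hi
    intro hdi
    obtain ⟨k, hk⟩ := hdvd
    obtain ⟨k', hk'⟩ := hdi
    exact hnd ⟨k + k', by linear_combination hk + hk'⟩
  have hm : ¬ E ∣ (n - 2*E) := by
    rintro ⟨k, hk⟩
    exact hnd ⟨k + 2, by linear_combination hk⟩
  -- decomposition z = g + w
  have hsup : Set.IsPWO (Function.support fun i : ℤ => if E ∣ i then 0 else z.coeff i) := by
    apply z.isPWO_support'.mono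
    intro i hi
    simp only [Function.mem_support] at hi ⊢
    intro h0
    apply hi
    rw [h0]
    split <;> rfl
  set w : LaurentSeries L := ⟨fun i => if E ∣ i then 0 else z.coeff i, hsup⟩ with hwdef
  have hwc : ∀ i, w.coeff i = if E ∣ i then 0 else z.coeff i := fun i => rfl
  set g : LaurentSeries L := z - w with hgdef
  have hgc : ∀ i, g.coeff i = if E ∣ i then z.coeff i else 0 := by
    intro i
    rw [hgdef, HahnSeries.coeff_sub, hwc]
    split <;> simp
  have hgv : ∀ i, ¬ E ∣ i → g.coeff i = 0 := by
    intro i hi; rw [hgc, if_neg hi]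
  have hgE : g.coeff (-E) = a := by
    rw [hgc, if_pos ⟨-1, by ring⟩, haN, hNE]
  have hgne : g ≠ 0 := fun h0 => ha (by rw [← hgE, h0]; rfl)
  have hwn : w.coeff n = z.coeff n := by rw [hwc, if_neg hnd]
  have hwne : w ≠ 0 := fun h0 => hzn (by rw [← hwn, h0]; rfl)
  have hgorder : g.order = -E := by
    apply horder _ _ (hgE ▸ ha)
    intro i hi
    rw [hgc]
    split
    · exact hbelow i (by omega)
    · rfl
  have hworder : w.order = n := by
    apply horder _ _ (hwn ▸ hzn)
    intro i hi
    rw [hwc]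
    split
    · rfl
    · exact hminz i hi (by assumption)
  have hzgw : z = g + w := by rw [hgdef]; ring
  have hz3' : z^3 = g*g*g + (g*g*w + g*g*w + g*g*w) + (g*(w*w) + g*(w*w) + g*(w*w)) + w*w*w := by
    rw [show z = g + w from hzgw]; ring
  have c1 : (g*g*g).coeff (n - 2*E) = 0 :=
    hmul0 (g*g) g (fun i hi => hmul0 g g hgv hgv i hi) hgv _ hm
  have c2 : (g*g*w).coeff (n - 2*E) = a * a * z.coeff n := by
    have h1 := hlc (g*g) w (mul_ne_zero hgne hgne) hwne
    rw [HahnSeries.order_mul hgne hgne, hgorder, hworder] at h1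
    have h2 := hlc g g hgne hgne
    rw [hgorder, hgE] at h2
    rw [show n - 2*E = -E + -E + n from by ring, h1, h2, hwn]
  have c3 : (g*(w*w)).coeff (n - 2*E) = 0 := by
    apply HahnSeries.coeff_eq_zero_of_lt_order
    rw [HahnSeries.order_mul hgne (mul_ne_zero hwne hwne),
      HahnSeries.order_mul hwne hwne, hgorder, hworder]
    omega
  have c4 : (w*w*w).coeff (n - 2*E) = 0 := by
    apply HahnSeries.coeff_eq_zero_of_lt_order
    rw [HahnSeries.order_mul (mul_ne_zero hwne hwne) hwne,
      HahnSeries.order_mul hwne hwne, hworder]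
    omega
  have hz3c : (z^3).coeff (n - 2*E)
      = a * a * z.coeff n + a * a * z.coeff n + a * a * z.coeff n := by
    rw [hz3']
    simp only [HahnSeries.coeff_add, c1, c2, c3, c4]
    ring
  -- the final equation
  have heq : (D (D z)).coeff (n - 2*E)
      = 2 * (z^3).coeff (n - 2*E) + t * z.coeff (n - 2*E)
        + (if (n - 2*E : ℤ) = 0 then α else 0) := by
    rw [hzeq, hrhs]
  rw [hDDn, hz3c, hminz (n - 2*E) (by omega) hm,
    if_neg (fun h0 => hm (by rw [h0]; exact dvd_zero E))] at heq
  have h2 : (n : L) * ((n : L) - e) * (z.coeff n * γ^2)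
      = 6 * (e : L)^2 * (z.coeff n * γ^2) := by
    field_simp at heq
    linear_combination heq + 6 * (e : L)^2 * z.coeff n * hgam
  have key : (n : L) * ((n : L) - e) = 6 * (e : L)^2 :=
    mul_right_cancel₀ (mul_ne_zero hzn (pow_ne_zero 2 hγ)) h2
  have hZ : ((n*(n - E) : ℤ) : L) = ((6*E^2 : ℤ) : L) := by
    push_cast [hE]
    linear_combination key
  have hZZ : (n*(n - E) : ℤ) = 6*E^2 := Int.cast_injective hZ
  have hfact : (n - 3*E)*(n + 2*E) = 0 := by linear_combination hZZ
  rcases mul_eq_zero.mp hfact with h3 | h3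
  · exact hnd ⟨3, by omega⟩
  · exact hnd ⟨-2, by omega⟩
end

section
/- For every integer i, every coefficient of the Laurent series D(D(σ^i)) − (i(i−e)/e²)·γ²·σ^(i−2e) at an index strictly less than i − e is zero. -/
set_option maxHeartbeats 1600000

/-- For every integer `i`, every coefficient of the Laurent series
`D(D(σ^i)) − (i(i−e)/e²)·γ²·σ^(i−2e)` at an index strictly less than `i − e` is zero. -/
theorem statement_6
    (L : Type*) [Field L] [CharZero L]
    (e : ℕ) (he : 0 < e)
    (γ t α : L) (hγ : γ ≠ 0)
    (σ : LaurentSeries L) (hσ : σ = HahnSeries.single (1 : ℤ) 1)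
    (D : Derivation ℚ (LaurentSeries L) (LaurentSeries L))
    (hD₁ : ∀ a : L, ∀ n : ℤ, (n < 0 ∨ ¬ (e : ℤ) ∣ n) → (D (HahnSeries.C a)).coeff n = 0)
    (hD₂ : ∃ c₁ c₂ c₃ : L,
      σ ^ (e - 1) * D σ =
        HahnSeries.C ((e : L)⁻¹) *
          (HahnSeries.C γ + HahnSeries.C c₁ * σ ^ e + HahnSeries.C c₂ * σ ^ (2 * e)
            + HahnSeries.C c₃ * σ ^ (3 * e)))
    (hD₃ : ∀ f : LaurentSeries L, ∀ n : ℤ,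
      (D f).coeff n = ∑ᶠ i : ℤ,
        (D (HahnSeries.C (f.coeff i)) * σ ^ i
          + (i : LaurentSeries L) * HahnSeries.C (f.coeff i) * σ ^ (i - 1) * D σ).coeff n) :
    ∀ i n : ℤ, n < i - e →
      (D (D (σ ^ i))
        - HahnSeries.C (((i * (i - e) : ℤ) : L) / (e : L) ^ 2 * γ ^ 2)
            * σ ^ (i - 2 * e)).coeff n = 0 := by
  obtain ⟨c₁, c₂, c₃, h2⟩ := hD₂
  have he0 : (e : L) ≠ 0 := Nat.cast_ne_zero.mpr he.ne'
  have hzp : ∀ j : ℤ, σ ^ j = HahnSeries.single j 1 := by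
    intro j; rw [hσ, ← RatFunc.single_zpow]
  have hnp : ∀ m : ℕ, σ ^ m = HahnSeries.single (m : ℤ) 1 := by
    intro m; rw [hσ, HahnSeries.single_pow]; simp
  have hCσ : ∀ (a : L) (j : ℤ), HahnSeries.C a * σ ^ j = HahnSeries.single j a := by
    intro a j; rw [hzp, HahnSeries.C_apply, HahnSeries.single_mul_single, zero_add, mul_one]
  have hDσ : D σ = HahnSeries.single ((1:ℤ) - e) (γ / e) + HahnSeries.single 1 (c₁ / e)
      + HahnSeries.single ((e:ℤ) + 1) (c₂ / e) + HahnSeries.single (2*(e:ℤ) + 1) (c₃ / e) := by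
    have h3 : HahnSeries.single ((1:ℤ) - e) (1:L) * (σ ^ (e-1) * D σ) = D σ := by
      rw [hnp, ← mul_assoc, HahnSeries.single_mul_single, one_mul]
      have h4 : (1:ℤ) - e + ((e-1 : ℕ) : ℤ) = 0 := by omega
      rw [h4, HahnSeries.single_zero_one, one_mul]
    rw [← h3, h2, hnp, hnp, hnp]
    simp only [HahnSeries.C_apply, HahnSeries.single_mul_single, mul_add, mul_one, one_mul]
    norm_num
    ring_nf
  have hDk : ∀ (k : ℤ) (a : L), D (HahnSeries.single k a)
      = D (HahnSeries.C a) * HahnSeries.single k 1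
        + (HahnSeries.single (k - e) ((k:L) * a * γ / e)
        + HahnSeries.single k ((k:L) * a * c₁ / e)
        + HahnSeries.single (k + e) ((k:L) * a * c₂ / e)
        + HahnSeries.single (k + 2*e) ((k:L) * a * c₃ / e)) := by
    intro k a
    have hsingle : HahnSeries.single k a = HahnSeries.C a * σ ^ k := (hCσ a k).symm
    rw [hsingle, Derivation.leibniz, Derivation.leibniz_zpow, smul_eq_mul, smul_eq_mul,
      smul_eq_mul]
    rw [zsmul_eq_mul, ← map_intCast (HahnSeries.C : L →+* LaurentSeries L) k]
    rw [hDσ, hzp, hzp]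
    simp only [HahnSeries.C_apply, HahnSeries.single_mul_single, mul_add, mul_one, one_mul]
    ring_nf
  intro i n hn
  have hDC : ∀ (a : L) (k : ℤ), n < k →
      (D (HahnSeries.C a) * HahnSeries.single k 1).coeff n = 0 := by
    intro a k hk
    have h : n = (n - k) + k := by ring
    rw [h, HahnSeries.coeff_mul_single_add, hD₁ a _ (Or.inl (by omega)), zero_mul]
  rw [hzp i, hDk i 1, map_add, map_add, map_add, map_add, hDk, hDk, hDk, hDk, hCσ]
  have hD1 : D (HahnSeries.C (1:L)) = 0 := by rw [map_one]; exact Derivation.map_one_eq_zero D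
  rw [hD1, zero_mul, map_zero]
  simp only [HahnSeries.coeff_sub, HahnSeries.coeff_add, HahnSeries.coeff_zero]
  rw [hDC _ _ (by omega), hDC _ _ (by omega), hDC _ _ (by omega), hDC _ _ (by omega)]
  have hB : n ≠ i - (e:ℤ) := by omega
  have hC' : n ≠ i - (e:ℤ) + e := by omega
  have hD' : n ≠ i - (e:ℤ) + 2*e := by omega
  have hE : n ≠ i := by omega
  have hF : n ≠ i + (e:ℤ) := by omega
  have hG : n ≠ i + (e:ℤ) - e := by omega
  have hH : n ≠ i + (e:ℤ) + e := by omega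
  have hI : n ≠ i + (e:ℤ) + 2*e := by omega
  have hJ : n ≠ i + 2*(e:ℤ) := by omega
  have hK : n ≠ i + 2*(e:ℤ) - e := by omega
  have hM : n ≠ i + 2*(e:ℤ) + e := by omega
  have hN : n ≠ i + 2*(e:ℤ) + 2*e := by omega
  simp only [HahnSeries.coeff_single, if_neg hB, if_neg hC', if_neg hD', if_neg hE,
    if_neg hF, if_neg hG, if_neg hH, if_neg hI, if_neg hJ, if_neg hK, if_neg hM, if_neg hN]
  rcases eq_or_ne n (i - 2*(e:ℤ)) with h | h
  · rw [if_pos (by omega : n = i - (e:ℤ) - e), if_pos h]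
    push_cast
    field_simp
    ring
  · rw [if_neg (by omega : n ≠ i - (e:ℤ) - e), if_neg h]
    simp
end

section
/- Let z = Σ_i a_iσ^i ∈ L((σ)) and let l be an integer not divisible by e such that a_i = 0 for every index i < l with i not divisible by e. Then the coefficient of σ^(l−2e) in D(D(z)) equals (l(l−e)/e²)·γ²·a_l. -/
set_option linter.unusedSectionVars false

section Aux
variable {L : Type*} [Field L] [CharZero L]

lemma coeff_mul_single (x : HahnSeries ℤ L) (r : L) (b n : ℤ) :
    (x * HahnSeries.single b r).coeff n = x.coeff (n - b) * r := by
  have h := HahnSeries.coeff_mul_single_add (r := r) (x := x) (a := n - b) (b := b)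
  simpa using h

lemma coeff_single_mul (x : HahnSeries ℤ L) (r : L) (b n : ℤ) :
    (HahnSeries.single b r * x).coeff n = r * x.coeff (n - b) := by
  have h := HahnSeries.coeff_single_mul_add (r := r) (x := x) (a := n - b) (b := b)
  simpa using h

lemma sig_npow (m : ℕ) : (HahnSeries.single (1:ℤ) (1:L)) ^ m = HahnSeries.single (m:ℤ) 1 := by
  simp

lemma sig_zpow (i : ℤ) : (HahnSeries.single (1:ℤ) (1:L)) ^ i = HahnSeries.single i 1 := by
  cases i with
  | ofNat n => rw [Int.ofNat_eq_coe, zpow_natCast, sig_npow]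
  | negSucc n =>
      rw [zpow_negSucc, sig_npow]
      have h : (HahnSeries.single (Int.negSucc n) (1:L)) *
          (HahnSeries.single ((n+1:ℕ):ℤ) (1:L)) = 1 := by
        rw [HahnSeries.single_mul_single, one_mul,
          show Int.negSucc n + ((n+1:ℕ):ℤ) = 0 by simp [Int.negSucc_eq],
          HahnSeries.single_zero_one]
      exact (eq_inv_of_mul_eq_one_left h).symm

end Aux

set_option maxHeartbeats 1600000 in
/-- Let `z = Σ_i a_iσ^i ∈ L((σ))` and let `l` be an integer not divisible
by `e` such that `a_i = 0` for every index `i < l` with `i` not divisible by `e`.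
Then the coefficient of `σ^(l−2e)` in `D(D(z))` equals `(l(l−e)/e²)·γ²·a_l`. -/
theorem statement_7
    (L : Type*) [Field L] [CharZero L]
    (e : ℕ) (he : 0 < e)
    (γ t α : L) (hγ : γ ≠ 0)
    (σ : LaurentSeries L) (hσ : σ = HahnSeries.single (1 : ℤ) 1)
    (D : Derivation ℚ (LaurentSeries L) (LaurentSeries L))
    (hD₁ : ∀ a : L, ∀ n : ℤ, (n < 0 ∨ ¬ (e : ℤ) ∣ n) → (D (HahnSeries.C a)).coeff n = 0)
    (hD₂ : ∃ c₁ c₂ c₃ : L,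
      σ ^ (e - 1) * D σ =
        HahnSeries.C ((e : L)⁻¹) *
          (HahnSeries.C γ + HahnSeries.C c₁ * σ ^ e + HahnSeries.C c₂ * σ ^ (2 * e)
            + HahnSeries.C c₃ * σ ^ (3 * e)))
    (hD₃ : ∀ f : LaurentSeries L, ∀ n : ℤ,
      (D f).coeff n = ∑ᶠ i : ℤ,
        (D (HahnSeries.C (f.coeff i)) * σ ^ i
          + (i : LaurentSeries L) * HahnSeries.C (f.coeff i) * σ ^ (i - 1) * D σ).coeff n)
    (z : LaurentSeries L) (l : ℤ) (hl : ¬ (e : ℤ) ∣ l)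
    (hvanish : ∀ i : ℤ, i < l → ¬ (e : ℤ) ∣ i → z.coeff i = 0) :
    (D (D z)).coeff (l - 2 * e) = ((l * (l - e) : ℤ) : L) / (e : L) ^ 2 * γ ^ 2 * z.coeff l := by
  obtain ⟨c₁, c₂, c₃, hD2⟩ := hD₂
  have he' : (0:ℤ) < (e:ℤ) := by exact_mod_cast he
  have heL : (e:L) ≠ 0 := Nat.cast_ne_zero.mpr he.ne'
  have hσne : σ ≠ 0 := by
    rw [hσ]; exact HahnSeries.single_ne_zero one_ne_zero
  have hzpow : ∀ i : ℤ, σ ^ i = HahnSeries.single i (1:L) := by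
    rw [hσ]; exact sig_zpow
  have hnpow : ∀ m : ℕ, σ ^ m = HahnSeries.single (m:ℤ) (1:L) := by
    rw [hσ]; exact sig_npow
  -- coefficients of D σ
  have hDσc : ∀ k : ℤ, (D σ).coeff k =
      if k = 1 - e then (e:L)⁻¹*γ else if k = 1 then (e:L)⁻¹*c₁
      else if k = 1 + e then (e:L)⁻¹*c₂ else if k = 1 + 2*e then (e:L)⁻¹*c₃ else 0 := by
    intro k
    have base : (D σ).coeff k = ((e:L))⁻¹ *
        ((HahnSeries.C γ + HahnSeries.C c₁ * σ ^ e + HahnSeries.C c₂ * σ ^ (2 * e)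
            + HahnSeries.C c₃ * σ ^ (3 * e)).coeff (k + ((e:ℤ)-1))) := by
      have hc : ((e-1:ℕ):ℤ) = (e:ℤ) - 1 := by omega
      calc (D σ).coeff k = (σ ^ (e-1) * D σ).coeff (k + ((e:ℤ)-1)) := by
            rw [hnpow, hc, coeff_single_mul, one_mul, add_sub_cancel_right]
        _ = _ := by
            rw [hD2, HahnSeries.C_apply, coeff_single_mul, sub_zero]
    rw [base]
    simp only [HahnSeries.coeff_add, HahnSeries.C_apply, hnpow,
      HahnSeries.single_mul_single, zero_add, mul_one, HahnSeries.coeff_single]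
    push_cast
    have e1 : k + ((e:ℤ)-1) = 0 ↔ k = 1 - e := by omega
    have e2 : k + ((e:ℤ)-1) = (e:ℤ) ↔ k = 1 := by omega
    have e3 : k + ((e:ℤ)-1) = 2*(e:ℤ) ↔ k = 1 + e := by omega
    have e4 : k + ((e:ℤ)-1) = 3*(e:ℤ) ↔ k = 1 + 2*e := by omega
    simp only [e1, e2, e3, e4]
    split_ifs <;> first | ring1 | (exfalso; omega)
  -- key computation
  have key : ∀ (f : LaurentSeries L) (n : ℤ), ¬ (e:ℤ) ∣ n →
      (∀ i : ℤ, i ≤ n → ¬ (e:ℤ) ∣ i → f.coeff i = 0) →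
      (D f).coeff n = ((n + e : ℤ) : L) * f.coeff (n + e) * ((e:L)⁻¹ * γ) := by
    intro f n hn hv
    rw [hD₃ f n]
    have hterm : ∀ i : ℤ,
        (D (HahnSeries.C (f.coeff i)) * σ ^ i
          + (i : LaurentSeries L) * HahnSeries.C (f.coeff i) * σ ^ (i - 1) * D σ).coeff n
        = (D (HahnSeries.C (f.coeff i))).coeff (n - i)
          + (i:L) * f.coeff i * (D σ).coeff (n - i + 1) := by
      intro i
      rw [HahnSeries.coeff_add, hzpow i]
      congr 1
      · rw [coeff_mul_single, mul_one]
      · have hint : (i : LaurentSeries L) = HahnSeries.C ((i:L)) := by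
          rw [map_intCast]
        rw [hint, ← map_mul, hzpow (i-1), HahnSeries.C_apply, mul_assoc,
          coeff_single_mul, coeff_single_mul]
        rw [show n - 0 - (i - 1) = n - i + 1 by ring]
        ring
    have hzero : ∀ i : ℤ, i ≠ n + e →
        (D (HahnSeries.C (f.coeff i)) * σ ^ i
          + (i : LaurentSeries L) * HahnSeries.C (f.coeff i) * σ ^ (i - 1) * D σ).coeff n = 0 := by
      intro i hi
      rw [hterm i]
      by_cases hdvd : (e:ℤ) ∣ (n - i)
      · by_cases hle : i ≤ n
        · have hnd : ¬ (e:ℤ) ∣ i := by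
            intro h
            exact hn (by simpa using dvd_add hdvd h)
          have hz := hv i hle hnd
          rw [hz]
          simp
        · have h1 : (D (HahnSeries.C (f.coeff i))).coeff (n - i) = 0 :=
            hD₁ _ _ (Or.inl (by omega))
          have h2 : (D σ).coeff (n - i + 1) = 0 := by
            rw [hDσc]
            have h1e : n - i + 1 ≠ 1 - e := by omega
            have h2e : n - i + 1 ≠ 1 := by omega
            have h3e : n - i + 1 ≠ 1 + e := by omega
            have h4e : n - i + 1 ≠ 1 + 2*e := by omega
            simp [h1e, h2e, h3e, h4e]
          rw [h1, h2]
          ring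
      · have h1 : (D (HahnSeries.C (f.coeff i))).coeff (n - i) = 0 :=
          hD₁ _ _ (Or.inr hdvd)
        have h2 : (i:L) * f.coeff i * (D σ).coeff (n - i + 1) = 0 := by
          rw [hDσc]
          split_ifs with ha hb hc hd
          · -- n - i + 1 = 1 - e → i = n + e, contradiction
            exact absurd (by omega : i = n + e) hi
          · exact absurd (⟨0, by omega⟩ : (e:ℤ) ∣ (n - i)) hdvd
          · exact absurd (⟨1, by omega⟩ : (e:ℤ) ∣ (n - i)) hdvd
          · exact absurd (⟨2, by omega⟩ : (e:ℤ) ∣ (n - i)) hdvd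
          · ring
        rw [h1, h2]
        ring
    rw [finsum_eq_single _ (n + e) hzero, hterm]
    have h1 : (D (HahnSeries.C (f.coeff (n+e)))).coeff (n - (n+e)) = 0 :=
      hD₁ _ _ (Or.inl (by omega))
    rw [h1, hDσc]
    rw [show n - (n+e) + 1 = 1 - e by ring]
    simp
  -- apply key twice
  have hw : (D z).coeff (l - e) = ((l : ℤ) : L) * z.coeff l * ((e:L)⁻¹ * γ) := by
    have hnd : ¬ (e:ℤ) ∣ (l - e) := by
      intro h
      exact hl (by simpa using dvd_add h (dvd_refl (e:ℤ)))
    have := key z (l - e) hnd (fun i hi hid => hvanish i (by omega) hid)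
    rw [this, show l - e + e = l by ring]
  have hw0 : ∀ n : ℤ, n < l - e → ¬(e:ℤ) ∣ n → (D z).coeff n = 0 := by
    intro n hn hnd
    rw [key z n hnd (fun i hi hid => hvanish i (by omega) hid)]
    have hnd2 : ¬ (e:ℤ) ∣ (n + e) := by
      intro h
      exact hnd (by simpa using dvd_sub h (dvd_refl (e:ℤ)))
    rw [hvanish (n+e) (by omega) hnd2]
    ring
  have hld : ¬ (e:ℤ) ∣ (l - 2*e) := by
    intro h
    refine hl ?_
    have : (e:ℤ) ∣ 2*e := dvd_mul_left _ _
    simpa using dvd_add h this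
  rw [key (D z) (l - 2*e) hld (fun i hi hid => hw0 i (by omega) hid)]
  rw [show l - 2*e + e = l - e by ring, hw]
  push_cast
  field_simp
end

section
/- Let z = Σ_i a_iσ^i ∈ L((σ)) have order r ≥ 0, and let l be an integer not divisible by e such that a_i = 0 for every index i < l with i not divisible by e. Then the coefficient of σ^(l−2e) in the Laurent series z³ is zero. -/
/-- Let `z = Σ_i a_iσ^i ∈ L((σ))` have order `r ≥ 0`, and let `l` be an
integer not divisible by `e` such that `a_i = 0` for every index `i < l` with `i` not
divisible by `e`. Then the coefficient of `σ^(l−2e)` in the Laurent series `z³` is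
zero. -/
theorem statement_8
    (L : Type*) [Field L]
    (e : ℕ) (he : 0 < e)
    (z : LaurentSeries L) (hz₀ : z ≠ 0) (hr : 0 ≤ z.order)
    (l : ℤ) (hl : ¬ (e : ℤ) ∣ l)
    (hvanish : ∀ i : ℤ, i < l → ¬ (e : ℤ) ∣ i → z.coeff i = 0) :
    (z ^ 3).coeff (l - 2 * e) = 0 := by
  have he' : (0:ℤ) < e := by exact_mod_cast he
  have key : ∀ i : ℤ, z.coeff i ≠ 0 → 0 ≤ i ∧ ((e:ℤ) ∣ i ∨ l ≤ i) := by
    intro i hi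
    have h1 : z.order ≤ i := HahnSeries.order_le_of_coeff_ne_zero hi
    refine ⟨le_trans hr h1, ?_⟩
    by_contra h
    push_neg at h
    exact hi (hvanish i h.2 h.1)
  have key2 : ∀ m : ℤ, (z * z).coeff m ≠ 0 → 0 ≤ m ∧ ((e:ℤ) ∣ m ∨ l ≤ m) := by
    intro m hm
    by_contra h
    apply hm
    rw [HahnSeries.coeff_mul]
    apply Finset.sum_eq_zero
    rintro ⟨j, k⟩ hjk
    rw [Finset.mem_addAntidiagonal] at hjk
    obtain ⟨hj, hk, hsum⟩ := hjk
    exfalso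
    obtain ⟨hj0, hjd⟩ := key j hj
    obtain ⟨hk0, hkd⟩ := key k hk
    have hm0 : 0 ≤ m := hsum ▸ add_nonneg hj0 hk0
    push_neg at h
    obtain ⟨hmd, hml⟩ := h hm0
    rcases hjd with hjd | hjd
    · rcases hkd with hkd | hkd
      · exact hmd (hsum ▸ dvd_add hjd hkd)
      · exact absurd hml (not_lt.mpr (hsum ▸ le_add_of_nonneg_of_le hj0 hkd))
    · exact absurd hml (not_lt.mpr (hsum ▸ le_add_of_le_of_nonneg hjd hk0))
  rw [pow_succ, pow_two, HahnSeries.coeff_mul]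
  apply Finset.sum_eq_zero
  rintro ⟨m, k⟩ hmk
  rw [Finset.mem_addAntidiagonal] at hmk
  obtain ⟨hm, hk, hsum⟩ := hmk
  exfalso
  obtain ⟨hm0, hmd⟩ := key2 m hm
  obtain ⟨hk0, hkd⟩ := key k hk
  have hlt : l - 2 * e < l := by linarith
  rcases hmd with hmd | hmd
  · rcases hkd with hkd | hkd
    · apply hl
      have h2e : (e:ℤ) ∣ 2 * e := ⟨2, mul_comm _ _⟩
      have : (e:ℤ) ∣ l - 2 * e := hsum ▸ dvd_add hmd hkd
      simpa using dvd_add this h2e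
    · have : l ≤ l - 2 * e := hsum ▸ le_add_of_nonneg_of_le hm0 hkd
      linarith
  · have : l ≤ l - 2 * e := hsum ▸ le_add_of_le_of_nonneg hmd hk0
    linarith
end

section
/- Let z = Σ_i a_iσ^i ∈ L((σ)) have order exactly −e, and let l be an integer not divisible by e such that a_i = 0 for every index i < l with i not divisible by e. Then the coefficient of σ^(l−2e) in the Laurent series z³ equals 3·(a_{−e})²·a_l. -/
private lemma hs_mul_coeff_zero {L : Type*} [Field L] (x y : HahnSeries ℤ L) (n : ℤ)
    (h : ∀ i j : ℤ, i + j = n → x.coeff i * y.coeff j = 0) :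
    (x * y).coeff n = 0 := by
  rw [HahnSeries.coeff_mul]
  refine Finset.sum_eq_zero fun ij hij => ?_
  rw [Finset.mem_addAntidiagonal] at hij
  exact h ij.1 ij.2 hij.2.2

private lemma hs_mul_coeff_eq {L : Type*} [Field L] (x y : HahnSeries ℤ L) (i j : ℤ)
    (h : ∀ i' j' : ℤ, i' + j' = i + j → ¬(i' = i ∧ j' = j) → x.coeff i' * y.coeff j' = 0) :
    (x * y).coeff (i + j) = x.coeff i * y.coeff j := by
  rw [HahnSeries.coeff_mul]
  by_cases hx : x.coeff i * y.coeff j = 0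
  · rw [hx]
    refine Finset.sum_eq_zero fun ij hij => ?_
    rw [Finset.mem_addAntidiagonal] at hij
    by_cases hij' : ij.1 = i ∧ ij.2 = j
    · rw [hij'.1, hij'.2]; exact hx
    · exact h ij.1 ij.2 hij.2.2 hij'
  · have hxi : x.coeff i ≠ 0 := fun h0 => hx (by rw [h0, zero_mul])
    have hyj : y.coeff j ≠ 0 := fun h0 => hx (by rw [h0, mul_zero])
    refine Finset.sum_eq_single_of_mem (i, j) ?_ ?_
    · rw [Finset.mem_addAntidiagonal]
      exact ⟨hxi, hyj, rfl⟩
    · intro ij hij hne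
      rw [Finset.mem_addAntidiagonal] at hij
      exact h ij.1 ij.2 hij.2.2 fun hc => hne (Prod.ext hc.1 hc.2)

/-- Let `z = Σ_i a_iσ^i ∈ L((σ))` have order exactly `−e`, and let `l` be
an integer not divisible by `e` such that `a_i = 0` for every index `i < l` with `i`
not divisible by `e`. Then the coefficient of `σ^(l−2e)` in the Laurent series `z³`
equals `3·(a_{−e})²·a_l`. -/
theorem statement_9
    (L : Type*) [Field L]
    (e : ℕ) (he : 0 < e)
    (z : LaurentSeries L) (hz₀ : z ≠ 0) (hord : z.order = -(e : ℤ))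
    (l : ℤ) (hl : ¬ (e : ℤ) ∣ l)
    (hvanish : ∀ i : ℤ, i < l → ¬ (e : ℤ) ∣ i → z.coeff i = 0) :
    (z ^ 3).coeff (l - 2 * e) = 3 * z.coeff (-(e : ℤ)) ^ 2 * z.coeff l := by
  set a := z.coeff (-(e : ℤ)) with ha_def
  set c := z.coeff l with hc_def
  set s : LaurentSeries L := HahnSeries.single l c with hs_def
  set y : LaurentSeries L := z - s with hy_def
  have hle : l ≠ -(e : ℤ) := by
    intro h; exact hl (h ▸ ⟨-1, by ring⟩)
  have hzlow : ∀ i : ℤ, i < -(e : ℤ) → z.coeff i = 0 := by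
    intro i hi
    exact HahnSeries.coeff_eq_zero_of_lt_order (by rw [hord]; exact hi)
  have hycoeff : ∀ i : ℤ, y.coeff i = if i = l then 0 else z.coeff i := by
    intro i
    rw [hy_def, HahnSeries.coeff_sub, hs_def]
    by_cases hi : i = l
    · simp [hi, hc_def]
    · simp [HahnSeries.coeff_single_of_ne hi, hi]
  have hyl : y.coeff l = 0 := by rw [hycoeff]; simp
  have hylow : ∀ i : ℤ, i < -(e : ℤ) → y.coeff i = 0 := by
    intro i hi
    rw [hycoeff]
    by_cases h : i = l
    · simp [h]
    · simp [h, hzlow i hi]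
  have hyvanish : ∀ i : ℤ, i ≤ l → ¬ (e : ℤ) ∣ i → y.coeff i = 0 := by
    intro i hi hdvd
    rcases eq_or_lt_of_le hi with rfl | hi'
    · exact hyl
    · rw [hycoeff]; simp [ne_of_lt hi', hvanish i hi' hdvd]
  have hyne : ∀ i : ℤ, y.coeff i ≠ 0 → -(e : ℤ) ≤ i ∧ ((e : ℤ) ∣ i ∨ l < i) := by
    intro i hi
    constructor
    · by_contra h; exact hi (hylow i (by omega))
    · by_contra h
      push_neg at h
      exact hi (hyvanish i h.2 (fun hd => h.1 hd))
  -- coefficient of y^3 vanishes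
  have hy3 : (y * (y * y)).coeff (l - 2 * e) = 0 := by
    refine hs_mul_coeff_zero _ _ _ fun i m him => ?_
    by_cases hi : y.coeff i = 0
    · rw [hi, zero_mul]
    · rw [hs_mul_coeff_zero y y m fun j k hjk => ?_, mul_zero]
      by_cases hj : y.coeff j = 0
      · rw [hj, zero_mul]
      by_cases hk : y.coeff k = 0
      · rw [hk, mul_zero]
      exfalso
      obtain ⟨hi1, hi2⟩ := hyne i hi
      obtain ⟨hj1, hj2⟩ := hyne j hj
      obtain ⟨hk1, hk2⟩ := hyne k hk
      rcases hi2 with hi2 | hi2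
      · rcases hj2 with hj2 | hj2
        · rcases hk2 with hk2 | hk2
          · apply hl
            have hd : (e : ℤ) ∣ (i + j + k) := dvd_add (dvd_add hi2 hj2) hk2
            have h2 : i + j + k = l - 2 * e := by omega
            rw [h2] at hd
            have h2e : (e : ℤ) ∣ 2 * (e : ℤ) := ⟨2, by ring⟩
            have := dvd_add hd h2e
            rwa [show l - 2 * (e : ℤ) + 2 * e = l by ring] at this
          · omega
        · omega
      · omega
  -- coefficient of y^2 at -2e
  have hy2 : (y * y).coeff (-(e : ℤ) + -(e : ℤ)) = a * a := by
    rw [hs_mul_coeff_eq y y (-(e : ℤ)) (-(e : ℤ)) fun i' j' hsum hne => ?_]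
    · have hne' : -(e : ℤ) ≠ l := fun h => hle h.symm
      have : y.coeff (-(e : ℤ)) = a := by
        rw [hycoeff, if_neg hne']
      rw [this]
    · have : i' < -(e : ℤ) ∨ j' < -(e : ℤ) := by
        by_contra h; push_neg at h; exact hne ⟨by omega, by omega⟩
      rcases this with h | h
      · rw [hylow i' h, zero_mul]
      · rw [hylow j' h, mul_zero]
  have hzsum : z = y + s := by rw [hy_def]; ring
  have hexp : z ^ 3 = y * (y * y) + (y * y * s + y * y * s + y * y * s)
      + (y * (s * s) + y * (s * s) + y * (s * s)) + s * (s * s) := by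
    rw [hzsum]; ring
  -- the y^2 * s term
  have hterm2 : (y * y * s).coeff (l - 2 * e) = a * a * c := by
    have h1 : l - 2 * e = (-(e : ℤ) + -(e : ℤ)) + l := by ring
    rw [h1, hs_def, HahnSeries.coeff_mul_single_add, hy2]
  -- the y * s^2 term
  have hterm3 : (y * (s * s)).coeff (l - 2 * e) = 0 := by
    rw [hs_def, HahnSeries.single_mul_single]
    have h1 : l - 2 * e = (-l - 2 * e) + (l + l) := by ring
    rw [h1, HahnSeries.coeff_mul_single_add]
    rcases lt_trichotomy l (-(e : ℤ)) with hcase | hcase | hcase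
    · have hc0 : c = 0 := hc_def.trans (hzlow l hcase)
      rw [hc0]; ring
    · exact absurd hcase hle
    · have : y.coeff (-l - 2 * e) = 0 := by
        apply hyvanish
        · omega
        · intro hd
          apply hl
          have h2e : (e : ℤ) ∣ 2 * (e : ℤ) := ⟨2, by ring⟩
          have h5 := dvd_add hd h2e
          rw [show -l - 2 * (e : ℤ) + 2 * e = -l by ring] at h5
          exact (dvd_neg).mp h5
      rw [this, zero_mul]
  -- the s^3 term
  have hterm4 : (s * (s * s)).coeff (l - 2 * e) = 0 := by
    rw [hs_def, HahnSeries.single_mul_single, HahnSeries.single_mul_single]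
    exact HahnSeries.coeff_single_of_ne (fun h => hle (by linarith))
  rw [hexp]
  simp only [HahnSeries.coeff_add, hy3, hterm2, hterm3, hterm4]
  ring
end

section
/- Let F ∈ K[X₁, X₂] be an irreducible polynomial and β ∈ M an element with F(β, u) = 0. If u − D₂(β) = D₁(β)·(2β³ + tβ + α), then F divides the polynomial F^δ + X₂·F_{X₁} + (2X₁³ + tX₁ + α)·F_{X₂} in K[X₁, X₂]. -/
set_option maxHeartbeats 1000000

open MvPolynomial

noncomputable section Statement10Aux

variable {K : Type*} [Field K] [CharZero K]

/-- Apply a derivation to each coefficient of a multivariate polynomial. -/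
noncomputable def mapDelta (δ : Derivation ℚ K K) (F : MvPolynomial (Fin 2) K) :
    MvPolynomial (Fin 2) K :=
  ∑ m ∈ F.support, monomial m (δ (F.coeff m))

lemma coeff_mapDelta (δ : Derivation ℚ K K) (F : MvPolynomial (Fin 2) K) (m : Fin 2 →₀ ℕ) :
    (mapDelta δ F).coeff m = δ (F.coeff m) := by
  classical
  rw [mapDelta, coeff_sum]
  simp only [coeff_monomial]
  by_cases h : m ∈ F.support
  · rw [Finset.sum_eq_single m (fun b _ hb => by simp [hb]) (fun hm => absurd h hm)]
    simp
  · rw [Finset.sum_eq_zero fun b hb => by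
      have : b ≠ m := fun e => h (e ▸ hb)
      simp [this]]
    rw [notMem_support_iff.mp h, map_zero]

lemma mapDelta_C (δ : Derivation ℚ K K) (a : K) : mapDelta δ (C a) = C (δ a) := by
  ext m
  rw [coeff_mapDelta, coeff_C, coeff_C, apply_ite (⇑δ), map_zero]

lemma mapDelta_add (δ : Derivation ℚ K K) (p q : MvPolynomial (Fin 2) K) :
    mapDelta δ (p + q) = mapDelta δ p + mapDelta δ q := by
  ext m
  rw [coeff_add, coeff_mapDelta, coeff_add, map_add, coeff_mapDelta, coeff_mapDelta]

lemma mapDelta_mul_X (δ : Derivation ℚ K K) (p : MvPolynomial (Fin 2) K) (i : Fin 2) :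
    mapDelta δ (p * X i) = mapDelta δ p * X i := by
  ext m
  rw [coeff_mapDelta, coeff_mul_X', coeff_mul_X', apply_ite (⇑δ), map_zero, coeff_mapDelta]

lemma deriv_aeval_eq {M : Type*} [Field M] [CharZero M] [Algebra K M]
    (δ : Derivation ℚ K K) (D : Derivation ℚ M M)
    (hD : ∀ a : K, D (algebraMap K M a) = algebraMap K M (δ a))
    (x : Fin 2 → M) (F : MvPolynomial (Fin 2) K) :
    D (aeval x F) = aeval x (mapDelta δ F)
      + D (x 0) * aeval x (pderiv 0 F) + D (x 1) * aeval x (pderiv 1 F) := by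
  induction F using MvPolynomial.induction_on with
  | C a =>
      have : aeval x (C a : MvPolynomial (Fin 2) K) = algebraMap K M a := aeval_C _ _
      simp [this, mapDelta_C, hD, pderiv_C]
  | add p q hp hq =>
      simp only [map_add, mapDelta_add, hp, hq]
      ring
  | mul_X p i hp =>
      have leib : D (aeval x (p * X i)) = aeval x p * D (x i) + x i * D (aeval x p) := by
        rw [map_mul, aeval_X, D.leibniz, smul_eq_mul, smul_eq_mul]
      have h01 : (0 : Fin 2) ≠ 1 := by decide
      have h10 : (1 : Fin 2) ≠ 0 := by decide
      fin_cases i <;>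
      · simp only [Fin.mk_zero, Fin.mk_one, Fin.isValue] at leib ⊢
        rw [leib]
        simp only [hp, mapDelta_mul_X, map_mul, map_add, aeval_X, pderiv_mul,
          pderiv_X_self, pderiv_X_of_ne h01, pderiv_X_of_ne h10, Fin.isValue, mul_one, mul_zero,
          add_zero, map_one, map_zero]
        ring

lemma dvd_of_aeval_eq_zero {M : Type*} [Field M] [Algebra K M]
    (u β : M) (hu : Transcendental K u)
    (F G : MvPolynomial (Fin 2) K) (hFirr : Irreducible F)
    (hF0 : aeval ![β, u] F = 0) (hG0 : aeval ![β, u] G = 0) :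
    F ∣ G := by
  classical
  by_cases hGz : G = 0
  · simp [hGz]
  set e : MvPolynomial (Fin 2) K ≃ₐ[K] Polynomial (Polynomial K) :=
    (finSuccEquiv K 1).trans (Polynomial.mapAlgEquiv
      ((finSuccEquiv K 0).trans (Polynomial.mapAlgEquiv (isEmptyAlgEquiv K (Fin 0))))) with he
  have heX0 : e (X 0) = Polynomial.X := by
    simp [he, finSuccEquiv_X_zero]
  have heX1 : e (X 1) = Polynomial.C Polynomial.X := by
    have h1 : (X 1 : MvPolynomial (Fin 2) K) = X (Fin.succ 0) := rfl
    simp [he, h1, finSuccEquiv_X_succ, finSuccEquiv_X_zero]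
  have heC : ∀ a : K, e (C a) = Polynomial.C (Polynomial.C a) := by
    intro a
    rw [show (C a : MvPolynomial (Fin 2) K) = algebraMap K _ a from rfl, AlgEquiv.commutes]
    simp [Polynomial.algebraMap_apply]
  -- evaluation maps
  set g0 : Polynomial K →+* M := (Polynomial.aeval u).toRingHom with hg0def
  have hg0 : Function.Injective g0 := by
    simpa [hg0def] using (transcendental_iff_injective).mp hu
  set Φ : Polynomial (Polynomial K) →+* M := Polynomial.eval₂RingHom g0 β with hΦdef
  have hcompat : ∀ H : MvPolynomial (Fin 2) K, Φ (e H) = aeval ![β, u] H := by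
    intro H
    have hhom : Φ.comp (e : MvPolynomial (Fin 2) K →+* Polynomial (Polynomial K)) =
        ((aeval ![β, u] : MvPolynomial (Fin 2) K →ₐ[K] M) : MvPolynomial (Fin 2) K →+* M) := by
      apply ringHom_ext
      · intro a
        simp [heC, hΦdef, hg0def]
      · intro i
        fin_cases i <;> simp [heX0, heX1, hΦdef, hg0def]
    exact RingHom.congr_fun hhom H
  set f := e F with hfdef
  set g := e G with hgdef
  have hf_irr : Irreducible f := (MulEquiv.irreducible_iff e).mpr hFirr
  have hΦf : Φ f = 0 := by have h := hcompat F; rw [hF0] at h; exact h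
  have hΦg : Φ g = 0 := by have h := hcompat G; rw [hG0] at h; exact h
  by_cases hdeg : f.natDegree = 0
  · exfalso
    have hfC : f = Polynomial.C (f.coeff 0) := Polynomial.eq_C_of_natDegree_eq_zero hdeg
    have : g0 (f.coeff 0) = 0 := by
      have := hΦf
      rw [hfC] at this
      simpa [hΦdef] using this
    have hc0 : f.coeff 0 = 0 := hg0 (by simpa using this)
    exact hf_irr.ne_zero (by rw [hfC, hc0, map_zero])
  · have hprim : f.IsPrimitive := by
      intro r hr
      obtain ⟨s, hs⟩ := hr
      rcases hf_irr.isUnit_or_isUnit hs with h | h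
      · exact Polynomial.isUnit_C.mp h
      · exfalso
        apply hdeg
        have hs0 : s.natDegree = 0 := Polynomial.natDegree_eq_zero_of_isUnit h
        have := Polynomial.natDegree_mul_le (p := Polynomial.C r) (q := s)
        rw [← hs] at this
        have h2 : f.natDegree ≤ 0 := by simpa [hs0] using this
        exact Nat.le_zero.mp h2
    set ρ : Polynomial K →+* RatFunc K := algebraMap (Polynomial K) (RatFunc K) with hρdef
    have hfL_irr : Irreducible (f.map ρ) :=
      (hprim.irreducible_iff_irreducible_map_fraction_map).mp hf_irr
    set Ψ : RatFunc K →+* M :=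
      IsFractionRing.lift (A := Polynomial K) (K := RatFunc K) (g := g0) hg0 with hΨdef
    set ev : Polynomial (RatFunc K) →+* M := Polynomial.eval₂RingHom Ψ β with hevdef
    have hΨρ : Ψ.comp ρ = g0 := RingHom.ext fun q => IsFractionRing.lift_algebraMap hg0 q
    have hev : ∀ p : Polynomial (Polynomial K), ev (p.map ρ) = Φ p := by
      intro p
      simp only [hevdef, hΦdef, Polynomial.coe_eval₂RingHom]
      rw [Polynomial.eval₂_map, hΨρ]
    have hfL0 : (f.map ρ) ∈ RingHom.ker ev := by
      rw [RingHom.mem_ker, hev, hΦf]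
    have hgL0 : (g.map ρ) ∈ RingHom.ker ev := by
      rw [RingHom.mem_ker, hev, hΦg]
    have hPprime : (RingHom.ker ev).IsPrime := RingHom.ker_isPrime ev
    have hmax : (Ideal.span {f.map ρ}).IsMaximal :=
      PrincipalIdealRing.isMaximal_of_irreducible hfL_irr
    have hle : Ideal.span {f.map ρ} ≤ RingHom.ker ev := by
      rw [Ideal.span_le, Set.singleton_subset_iff]
      exact hfL0
    have hPeq : Ideal.span {f.map ρ} = RingHom.ker ev :=
      hmax.eq_of_le hPprime.ne_top hle
    have hdvd : f.map ρ ∣ g.map ρ := by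
      rw [← Ideal.mem_span_singleton, hPeq]
      exact hgL0
    have hgne : g ≠ 0 := fun h => hGz (e.injective (by rw [map_zero]; exact h))
    have hcontu : IsUnit ((Polynomial.C g.content).map ρ) := by
      rw [Polynomial.map_C]
      refine Polynomial.isUnit_C.mpr (isUnit_iff_ne_zero.mpr ?_)
      have : g.content ≠ 0 := fun h => hgne (Polynomial.content_eq_zero_iff.mp h)
      exact fun h => this ((injective_iff_map_eq_zero ρ).mp
        (IsFractionRing.injective (Polynomial K) (RatFunc K)) _ h)
    have hdvd' : f.map ρ ∣ (g.primPart).map ρ := by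
      obtain ⟨v, hv⟩ := hcontu
      have hsplit : g.map ρ = ↑v * (g.primPart).map ρ := by
        rw [hv, ← Polynomial.map_mul, ← Polynomial.eq_C_content_mul_primPart]
      rw [hsplit] at hdvd
      exact (Units.dvd_mul_left).mp hdvd
    have hfp : f ∣ g.primPart :=
      hprim.dvd_of_fraction_map_dvd_fraction_map hdvd'
    have hfg : f ∣ g := hfp.trans g.primPart_dvd
    obtain ⟨r, hr⟩ := hfg
    exact ⟨e.symm r, e.injective (by rw [map_mul, AlgEquiv.apply_symm_apply, ← hr])⟩

end Statement10Aux

/-- `K` is a field of characteristic `0` with a derivation `δ` and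
`t, α ∈ K`; `M` is a field extension of `K`, `u ∈ M` is transcendental over `K`, and
`M` is algebraic over `K(u)`; `D₁`, `D₂` are derivations on `M` with `D₁` vanishing on
`K`, `D₁(u) = 1`, `D₂` extending `δ` and `D₂(u) = 0`.  Let `F ∈ K[X₁, X₂]` be an
irreducible polynomial and `β ∈ M` with `F(β, u) = 0`.  If
`u − D₂(β) = D₁(β)·(2β³ + tβ + α)`, then `F` divides
`F^δ + X₂·F_{X₁} + (2X₁³ + tX₁ + α)·F_{X₂}` in `K[X₁, X₂]`. -/
theorem statement_10
    (K : Type*) [Field K] [CharZero K]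
    (δ : Derivation ℚ K K) (t α : K)
    (M : Type*) [Field M] [CharZero M] [Algebra K M]
    (u : M) (hu : Transcendental K u)
    (hM : Algebra.IsAlgebraic (IntermediateField.adjoin K {u}) M)
    (D₁ D₂ : Derivation ℚ M M)
    (hD₁K : ∀ a : K, D₁ (algebraMap K M a) = 0) (hD₁u : D₁ u = 1)
    (hD₂K : ∀ a : K, D₂ (algebraMap K M a) = algebraMap K M (δ a)) (hD₂u : D₂ u = 0)
    (F : MvPolynomial (Fin 2) K) (hFirr : Irreducible F)
    -- `Fδ` is the polynomial obtained from `F` by applying `δ` to each coefficient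
    (Fδ : MvPolynomial (Fin 2) K) (hFδ : ∀ m : Fin 2 →₀ ℕ, Fδ.coeff m = δ (F.coeff m))
    (β : M) (hβ : aeval ![β, u] F = 0)
    (heq : u - D₂ β = D₁ β * (2 * β ^ 3 + algebraMap K M t * β + algebraMap K M α)) :
    F ∣ (Fδ + X 1 * pderiv 0 F + (C 2 * X 0 ^ 3 + C t * X 0 + C α) * pderiv 1 F) := by
  classical
  set c : M := 2 * β ^ 3 + algebraMap K M t * β + algebraMap K M α with hc
  set D : Derivation ℚ M M := D₂ + c • D₁ with hD
  have hDK : ∀ a : K, D (algebraMap K M a) = algebraMap K M (δ a) := by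
    intro a
    simp [hD, hD₂K, hD₁K]
  have hDβ : D β = u := by
    have h1 : D β = D₂ β + c * D₁ β := by simp [hD, smul_eq_mul]
    rw [h1, mul_comm c (D₁ β), ← heq]
    ring
  have hDu : D u = c := by
    simp [hD, hD₂u, hD₁u, smul_eq_mul]
  have hFδ_eq : Fδ = mapDelta δ F := by
    ext m
    rw [hFδ m, coeff_mapDelta]
  have key : aeval ![β, u] (mapDelta δ F) + u * aeval ![β, u] (pderiv 0 F)
      + c * aeval ![β, u] (pderiv 1 F) = 0 := by
    have h := deriv_aeval_eq δ D hDK ![β, u] F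
    rw [hβ, map_zero] at h
    rw [show (![β, u] 0) = β from rfl, show (![β, u] 1) = u from rfl, hDβ, hDu] at h
    exact h.symm
  have hG0 : aeval ![β, u]
      (Fδ + X 1 * pderiv 0 F + (C 2 * X 0 ^ 3 + C t * X 0 + C α) * pderiv 1 F) = 0 := by
    have h2 : (aeval ![β, u]) (C (2 : K) : MvPolynomial (Fin 2) K) = (2 : M) := by
      rw [aeval_C, map_ofNat]
    simp only [map_add, map_mul, map_pow, aeval_X, aeval_C, Matrix.cons_val_zero,
      Matrix.cons_val_one, Matrix.head_cons, hFδ_eq, h2]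
    calc _ = aeval ![β, u] (mapDelta δ F) + u * aeval ![β, u] (pderiv 0 F)
        + c * aeval ![β, u] (pderiv 1 F) := by rw [hc]; try ring
      _ = 0 := key
  exact dvd_of_aeval_eq_zero u β hu F _ hFirr hβ hG0
end
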